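/- arXiv:1907.07457 — 9 statements merged into one kernel-verified Lean document; each statement's English description precedes it below -/
import Mathlib

section
/- Let λ = e^{2πiθ} with θ Diophantine. There exist constants C̃, r > 0 such that for every integer n ≥ 1, every integer m ≥ 0, and every complex number u with Re(u) > 1, one has |∑_{j=m}^{∞} λ^{nj}/(u+j)| ≤ C̃ n^r / |u+m|. -/
open Filter


lemma tail_aux (x y : ℝ) (hx : 1 < x) (a : ℕ → ℝ)
    (hapos : ∀ j, 0 < a j) (hasq : ∀ j, (a j)^2 = (x+j)^2 + y^2)
    (m N : ℕ) : ∑ j ∈ Finset.Ico m N, 1/(a j * a (j+1)) ≤ 5 / a m := by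
  have hxj : ∀ j : ℕ, 1 < x + j := by
    intro j
    have : (0:ℝ) ≤ j := Nat.cast_nonneg j
    linarith
  have haxj : ∀ j, x + j ≤ a j := by
    intro j
    nlinarith [hasq j, hapos j, hxj j, sq_nonneg y]
  have hay : ∀ j, |y| ≤ a j := by
    intro j
    nlinarith [hasq j, hapos j, hxj j, sq_abs y, abs_nonneg y]
  set f : ℕ → ℝ := fun j => 1/(x+j) with hf
  have hfpos : ∀ j : ℕ, 0 < f j := by
    intro j; rw [hf]; have := hxj j; positivity
  have hterm : ∀ j : ℕ, 1/(a j * a (j+1)) ≤ f j - f (j+1) := by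
    intro j
    have h1 : (0:ℝ) < x + j := by linarith [hxj j]
    have h2 : (0:ℝ) < x + (j+1:ℕ) := by linarith [hxj (j+1)]
    have e : f j - f (j+1) = 1/((x+j)*(x+(j+1:ℕ))) := by
      rw [hf]
      field_simp
      push_cast; ring
    rw [e]
    apply one_div_le_one_div_of_le (by positivity)
    exact mul_le_mul (haxj j) (haxj (j+1)) h2.le (hapos j).le
  have hterm_pos : ∀ j, (0:ℝ) < 1/(a j * a (j+1)) := by
    intro j; have := hapos j; have := hapos (j+1); positivity
  have htel : ∀ (p q : ℕ), p ≤ q → ∑ j ∈ Finset.Ico p q, (f j - f (j+1)) = f p - f q := by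
    intro p q hpq
    induction q, hpq using Nat.le_induction with
    | base => simp
    | succ q hpq ih => rw [Finset.sum_Ico_succ_top hpq, ih]; ring
  rcases le_or_gt N m with hNm | hmN
  · rw [Finset.Ico_eq_empty (by omega)]
    have := hapos m; simp; positivity
  rcases le_or_gt |y| (x+m) with hcase | hcase
  · have h1 : ∑ j ∈ Finset.Ico m N, 1/(a j * a (j+1)) ≤ f m - f N :=
      le_of_le_of_eq (Finset.sum_le_sum fun j _ => hterm j) (htel m N hmN.le)
    have h2 : f m - f N ≤ f m := by linarith [hfpos N]
    have h3 : f m ≤ 5 / a m := by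
      rw [hf]
      rw [div_le_div_iff₀ (by linarith [hxj m]) (hapos m)]
      nlinarith [hasq m, hapos m, hxj m, sq_abs y, abs_nonneg y]
    linarith
  · have hy1 : (1:ℝ) < |y| := lt_trans (hxj m) hcase
    have hy0 : (0:ℝ) < |y| := by linarith
    set K := m + ⌈|y|⌉₊ with hK
    have hmK : m ≤ K := Nat.le_add_right _ _
    have hyK : |y| ≤ (K:ℝ) := by
      rw [hK]; push_cast
      have := Nat.le_ceil |y|
      have : (0:ℝ) ≤ m := Nat.cast_nonneg m
      linarith [Nat.le_ceil |y|]
    set N' := max N K with hN'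
    have hKN' : K ≤ N' := le_max_right _ _
    have hsub : ∑ j ∈ Finset.Ico m N, 1/(a j * a (j+1)) ≤ ∑ j ∈ Finset.Ico m N', 1/(a j * a (j+1)) :=
      Finset.sum_le_sum_of_subset_of_nonneg (Finset.Ico_subset_Ico_right (le_max_left _ _))
        (fun j _ _ => (hterm_pos j).le)
    have hsplit : ∑ j ∈ Finset.Ico m K, (1/(a j * a (j+1))) + ∑ j ∈ Finset.Ico K N', (1/(a j * a (j+1)))
        = ∑ j ∈ Finset.Ico m N', 1/(a j * a (j+1)) := Finset.sum_Ico_consecutive _ hmK hKN'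
    have hfirst : ∑ j ∈ Finset.Ico m K, 1/(a j * a (j+1)) ≤ 2/|y| := by
      have hb : ∀ j ∈ Finset.Ico m K, 1/(a j * a (j+1)) ≤ 1/(|y| * |y|) := by
        intro j _
        apply one_div_le_one_div_of_le (by positivity)
        exact mul_le_mul (hay j) (hay (j+1)) (abs_nonneg y) (hapos j).le
      have hcard : ((Finset.Ico m K).card : ℝ) = (⌈|y|⌉₊ : ℝ) := by
        rw [Nat.card_Ico, hK]; simp
      calc ∑ j ∈ Finset.Ico m K, 1/(a j * a (j+1))
          ≤ (Finset.Ico m K).card • (1/(|y| * |y|)) := Finset.sum_le_card_nsmul _ _ _ hb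
        _ = ((Finset.Ico m K).card : ℝ) * (1/(|y| * |y|)) := by rw [nsmul_eq_mul]
        _ = (⌈|y|⌉₊ : ℝ) * (1/(|y| * |y|)) := by rw [hcard]
        _ ≤ 2/|y| := by
            have hceil : (⌈|y|⌉₊:ℝ) ≤ 2*|y| := by
              have h := Nat.ceil_lt_add_one (abs_nonneg y)
              linarith
            rw [mul_one_div, div_le_div_iff₀ (by positivity) hy0]
            nlinarith
    have hsecond : ∑ j ∈ Finset.Ico K N', 1/(a j * a (j+1)) ≤ 1/|y| := by
      have h1 : ∑ j ∈ Finset.Ico K N', 1/(a j * a (j+1)) ≤ f K - f N' :=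
        le_of_le_of_eq (Finset.sum_le_sum fun j _ => hterm j) (htel K N' hKN')
      have h2 : f K - f N' ≤ f K := by linarith [hfpos N']
      have h3 : f K ≤ 1/|y| := by
        rw [hf]
        apply one_div_le_one_div_of_le hy0
        linarith
      linarith
    have hlast : 3/|y| ≤ 5/a m := by
      rw [div_le_div_iff₀ hy0 (hapos m)]
      nlinarith [hasq m, hapos m, hxj m, sq_abs y]
    have : (2:ℝ)/|y| + 1/|y| = 3/|y| := by ring
    linarith

/-- Uniform tail estimate `|∑_{j=m}^∞ λ^{nj}/(u+j)| ≤ C̃ n^r / |u+m|`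
for `Re u > 1`, with constants independent of `n ≥ 1`, `m ≥ 0` and `u`. -/
theorem stmt2 (θ : ℝ) (l : ℂ) (hl : l = Complex.exp (2 * Real.pi * Complex.I * θ))
    (hdio : ∃ c r : ℝ, 0 < c ∧ 0 < r ∧ ∀ n : ℕ, 1 ≤ n →
      c * (n : ℝ) ^ (-r) ≤ ‖l ^ n - 1‖) :
    ∃ C r : ℝ, 0 < C ∧ 0 < r ∧ ∀ n m : ℕ, 1 ≤ n → ∀ u : ℂ, 1 < u.re →
      ∃ S : ℂ,
        Tendsto (fun N : ℕ => ∑ j ∈ Finset.Ico m N, l ^ (n * j) / (u + j))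
          atTop (nhds S) ∧
        ‖S‖ ≤ C * (n : ℝ) ^ r / ‖u + m‖ := by
  obtain ⟨c, r, hc, hr, hD⟩ := hdio
  refine ⟨10/c, r, by positivity, hr, ?_⟩
  intro n m hn u hu
  have hlabs : ‖l‖ = 1 := by
    rw [hl, Complex.norm_exp]
    have : (2 * ↑Real.pi * Complex.I * ↑θ).re = 0 := by
      simp [Complex.mul_re, Complex.mul_im]
    rw [this, Real.exp_zero]
  set μ : ℂ := l ^ n with hμ
  have hμabs : ‖μ‖ = 1 := by rw [hμ, norm_pow, hlabs, one_pow]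
  have hn0 : (0:ℝ) < n := by exact_mod_cast hn
  have hnr : (0:ℝ) < (n:ℝ) ^ r := Real.rpow_pos_of_pos hn0 r
  have hlow : c / (n:ℝ) ^ r ≤ ‖μ - 1‖ := by
    have h := hD n hn
    rwa [Real.rpow_neg (Nat.cast_nonneg n), ← div_eq_mul_inv] at h
  have hpos : 0 < ‖μ - 1‖ := lt_of_lt_of_le (by positivity) hlow
  have hμ1 : μ ≠ 1 := by
    intro h; rw [h] at hpos; simp at hpos
  set M := 2 / ‖μ - 1‖ with hM
  have hMpos : 0 < M := by positivity
  have hMle : M ≤ 2 * (n:ℝ) ^ r / c := by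
    rw [hM, div_le_div_iff₀ hpos hc]
    have h := (div_le_iff₀ hnr).mp hlow
    nlinarith
  set x := u.re with hx
  have hx1 : 1 < x := hu
  set b : ℕ → ℂ := fun j => 1/(u + (j:ℂ)) with hb
  set A : ℕ → ℂ := fun k => ∑ i ∈ Finset.Ico m k, μ ^ i with hA
  set g : ℕ → ℂ := fun j => A (j+1) * (b j - b (j+1)) with hg
  set a : ℕ → ℝ := fun j => ‖u + (j:ℂ)‖ with ha
  have hre : ∀ j : ℕ, (u + (j:ℂ)).re = x + j := by intro j; simp [hx]
  have him : ∀ j : ℕ, (u + (j:ℂ)).im = u.im := by intro j; simp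
  have hrepos : ∀ j : ℕ, (0:ℝ) < x + j := by
    intro j; have : (0:ℝ) ≤ j := Nat.cast_nonneg j; linarith
  have haxj : ∀ j : ℕ, x + j ≤ a j := by
    intro j
    rw [ha]
    calc x + (j:ℝ) = (u + (j:ℂ)).re := (hre j).symm
      _ ≤ ‖u + (j:ℂ)‖ := Complex.re_le_norm _
      _ = ‖u + (j:ℂ)‖ := rfl
  have hapos : ∀ j, 0 < a j := fun j => lt_of_lt_of_le (hrepos j) (haxj j)
  have hasq : ∀ j, (a j)^2 = (x + j)^2 + (u.im)^2 := by
    intro j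
    rw [ha]
    simp only
    rw [Complex.sq_norm, Complex.normSq_apply, hre, him]
    ring
  have hane : ∀ j : ℕ, u + (j:ℂ) ≠ 0 := by
    intro j h
    have := hapos j
    rw [ha] at this; simp only [h, norm_zero] at this
    exact lt_irrefl _ this
  have hAle : ∀ k, ‖A k‖ ≤ M := by
    intro k
    rcases le_or_gt k m with h | h
    · have h0 : A k = 0 := by
        rw [hA]; simp only; rw [Finset.Ico_eq_empty (by omega)]; simp
      rw [h0, norm_zero]; exact hMpos.le
    · rw [hA]; simp only
      rw [geom_sum_Ico hμ1 h.le, norm_div, hM]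
      gcongr
      have hμk : ∀ i : ℕ, ‖μ ^ i‖ = 1 := fun i => by rw [norm_pow, hμabs, one_pow]
      calc ‖μ ^ k - μ ^ m‖ ≤ ‖μ ^ k‖ + ‖μ ^ m‖ := norm_sub_le _ _
        _ = 2 := by rw [hμk, hμk]; norm_num
  have hb_eq : ∀ j : ℕ, b j - b (j+1) = 1/((u + (j:ℂ)) * (u + ((j+1:ℕ):ℂ))) := by
    intro j
    rw [hb]; simp only
    rw [div_sub_div _ _ (hane j) (hane (j+1))]
    congr 1
    push_cast
    ring
  have hbnorm : ∀ j : ℕ, ‖b j - b (j+1)‖ = 1/(a j * a (j+1)) := by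
    intro j
    rw [hb_eq j, norm_div, norm_one, norm_mul, ha]
  -- Abel summation identity
  have hid : ∀ N, ∑ j ∈ Finset.Ico m N, μ ^ j * b j
      = (∑ j ∈ Finset.Ico m N, g j) + A N * b N := by
    intro N
    induction N with
    | zero =>
        have h0 : A 0 = 0 := by
          rw [hA]; simp only; rw [Finset.Ico_eq_empty (by omega)]; simp
        simp [h0]
    | succ N ih =>
        rcases le_or_gt m N with h | h
        · rw [Finset.sum_Ico_succ_top h, Finset.sum_Ico_succ_top h, ih]
          have hA' : A (N+1) = A N + μ ^ N := by
            rw [hA]; simp only; rw [Finset.sum_Ico_succ_top h]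
          rw [hg]; simp only
          rw [hA']
          ring
        · have h1 : Finset.Ico m (N+1) = ∅ := Finset.Ico_eq_empty (by omega)
          have h2 : Finset.Ico m N = ∅ := Finset.Ico_eq_empty (by omega)
          have hAN : A N = 0 := by rw [hA]; simp only; rw [h2]; simp
          have hAN1 : A (N+1) = 0 := by rw [hA]; simp only; rw [h1]; simp
          rw [h1, h2] at *
          simp [hAN, hAN1]
  have hg0 : ∀ j, j < m → g j = 0 := by
    intro j hj
    rw [hg]; simp only
    have h0 : A (j+1) = 0 := by
      rw [hA]; simp only; rw [Finset.Ico_eq_empty (by omega)]; simp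
    rw [h0, zero_mul]
  have hrangeg : ∀ N, ∑ j ∈ Finset.Ico m N, g j = ∑ j ∈ Finset.range N, g j := by
    intro N
    apply Finset.sum_subset
    · intro j hj; rw [Finset.mem_Ico] at hj; rw [Finset.mem_range]; omega
    · intro j hj hj'
      rw [Finset.mem_range] at hj; rw [Finset.mem_Ico] at hj'
      exact hg0 j (by omega)
  set w : ℕ → ℝ := fun j => if j < m then 0 else 1/(a j * a (j+1)) with hw
  have hwnn : ∀ j, 0 ≤ w j := by
    intro j; rw [hw]; dsimp only
    split
    · exact le_rfl
    · have := hapos j; have := hapos (j+1); positivity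
  have hgw : ∀ j, ‖g j‖ ≤ M * w j := by
    intro j
    rw [hw]; dsimp only
    by_cases hj : j < m
    · rw [if_pos hj, hg0 j hj, norm_zero, mul_zero]
    · rw [if_neg hj, hg]; simp only
      rw [norm_mul, hbnorm j]
      apply mul_le_mul_of_nonneg_right (hAle _)
      have := hapos j; have := hapos (j+1); positivity
  have hwsum : ∀ N, ∑ j ∈ Finset.range N, w j ≤ 5 / a m := by
    intro N
    have h1 : ∑ j ∈ Finset.range N, w j = ∑ j ∈ Finset.Ico m N, 1/(a j * a (j+1)) := by
      rw [← Finset.sum_subset (s₁ := Finset.Ico m N) (s₂ := Finset.range N)]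
      · apply Finset.sum_congr rfl
        intro j hj; rw [Finset.mem_Ico] at hj
        rw [hw]; dsimp only; rw [if_neg (by omega)]
      · intro j hj; rw [Finset.mem_Ico] at hj; rw [Finset.mem_range]; omega
      · intro j hj hj'
        rw [Finset.mem_range] at hj; rw [Finset.mem_Ico] at hj'
        rw [hw]; dsimp only; rw [if_pos (by omega)]
    rw [h1]
    exact tail_aux x u.im hx1 a hapos hasq m N
  have hwsummable : Summable w := summable_of_sum_range_le hwnn hwsum
  have hgnsummable : Summable (fun j => ‖g j‖) :=
    Summable.of_nonneg_of_le (fun j => norm_nonneg _) hgw (hwsummable.mul_left M)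
  have hgsummable : Summable g := Summable.of_norm hgnsummable
  refine ⟨∑' j, g j, ?_, ?_⟩
  · have hbound : ∀ N : ℕ, ‖A N * b N‖ ≤ M * (1/((N:ℝ)+1)) := by
      intro N
      rw [norm_mul]
      have hbN : ‖b N‖ ≤ 1/((N:ℝ)+1) := by
        rw [hb]; simp only
        rw [norm_div, norm_one]
        apply one_div_le_one_div_of_le (by positivity)
        calc (N:ℝ) + 1 ≤ x + N := by linarith
          _ ≤ a N := haxj N
          _ = ‖u + (N:ℂ)‖ := by rw [ha]
      exact mul_le_mul (hAle N) hbN (norm_nonneg _) hMpos.le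
    have htends : Tendsto (fun N : ℕ => M * (1/((N:ℝ)+1))) atTop (nhds 0) := by
      have := tendsto_one_div_add_atTop_nhds_zero_nat.const_mul M
      simpa using this
    have h0 : Tendsto (fun N : ℕ => A N * b N) atTop (nhds 0) :=
      squeeze_zero_norm hbound htends
    have heq : (fun N : ℕ => ∑ j ∈ Finset.Ico m N, l ^ (n * j) / (u + j))
        = fun N : ℕ => (∑ j ∈ Finset.range N, g j) + A N * b N := by
      funext N
      rw [← hrangeg, ← hid]
      apply Finset.sum_congr rfl
      intro j hj
      rw [pow_mul, ← hμ, hb]; simp only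
      rw [mul_one_div]
    rw [heq]
    have := hgsummable.hasSum.tendsto_sum_nat.add h0
    simpa using this
  · have h1 : ‖∑' j, g j‖ ≤ ∑' j, ‖g j‖ := norm_tsum_le_tsum_norm hgnsummable
    have h2 : ∑' j, ‖g j‖ ≤ ∑' j, M * w j :=
      Summable.tsum_le_tsum hgw hgnsummable (hwsummable.mul_left M)
    have h3 : ∑' j, M * w j = M * ∑' j, w j := tsum_mul_left
    have h4 : ∑' j, w j ≤ 5 / a m := Summable.tsum_le_of_sum_range_le hwsummable hwsum
    have h5 : (0:ℝ) ≤ ∑' j, w j := tsum_nonneg hwnn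
    have h6 : M * (∑' j, w j) ≤ (2 * (n:ℝ)^r/c) * (5 / a m) := by
      apply mul_le_mul hMle h4 h5 (by positivity)
    have h7 : (2 * (n:ℝ)^r/c) * (5 / a m) = 10/c * (n:ℝ)^r / a m := by
      field_simp
      ring
    have ham : a m = ‖u + (m:ℂ)‖ := by rw [ha]
    calc ‖∑' j, g j‖ ≤ ∑' j, ‖g j‖ := h1
      _ ≤ ∑' j, M * w j := h2
      _ = M * ∑' j, w j := h3
      _ ≤ (2 * (n:ℝ)^r/c) * (5 / a m) := h6
      _ = 10/c * (n:ℝ)^r / a m := h7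
      _ = 10/c * (n:ℝ)^r / ‖u + (m:ℂ)‖ := by rw [ham]
end

section
/- Let λ = e^{2πiθ} with θ Diophantine and let f be entire with f(w) = ∑_{k≥1} d_k w^k, f(0)=0. Then for every δ > 0 the series τ₁(u,w) := ∑_{k=0}^{∞} f(λ^k w)/(u+k) converges uniformly on compact subsets of {(u,w) : Re(u) > 1, |w| ≤ δ}, and there is a constant C(δ) > 0 such that |τ₁(u,w)| ≤ C(δ)/|u| on this set. -/
open Filter Topology

lemma aux_norm_add (u : ℂ) (hu : 1 ≤ u.re) (k : ℕ) :
    1 + (k : ℝ) ≤ ‖u + k‖ ∧ ‖u‖ ≤ ‖u + k‖ := by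
  constructor
  · have h1 : (u + k).re ≤ ‖u + k‖ := Complex.re_le_norm _
    simp only [Complex.add_re, Complex.natCast_re] at h1
    linarith
  · have h2 : Complex.normSq u ≤ Complex.normSq (u + k) := by
      simp only [Complex.normSq_apply, Complex.add_re, Complex.add_im, Complex.natCast_re,
        Complex.natCast_im, add_zero]
      nlinarith [Nat.cast_nonneg (α := ℝ) k, hu]
    have h3 : ‖u‖ ^ 2 ≤ ‖u + k‖ ^ 2 := by
      rw [Complex.sq_norm, Complex.sq_norm]; exact h2
    nlinarith [norm_nonneg u, norm_nonneg (u + k)]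

lemma aux_inv_sub (a : ℝ) (ha : 0 < a) : a⁻¹ - (a + 1)⁻¹ = (a * (a + 1))⁻¹ := by
  have h3 : a ≠ 0 := ne_of_gt ha
  have h4 : a + 1 ≠ 0 := by positivity
  rw [inv_sub_inv h3 h4, add_sub_cancel_left, one_div]

lemma aux_abel (z : ℂ) (B : ℝ) (hB : ∀ P : ℕ, ‖∑ i ∈ Finset.range P, z ^ i‖ ≤ B)
    (u : ℂ) (hu : 1 ≤ u.re) (N M : ℕ) :
    ‖∑ k ∈ Finset.Ico N M, z ^ k / (u + k)‖ ≤ B * (8 / (‖u‖ + N)) := by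
  have hB0 : (0 : ℝ) ≤ B := le_trans (by simp) (hB 1)
  have hre : ∀ k : ℕ, 1 + (k : ℝ) ≤ ‖u + k‖ := fun k => (aux_norm_add u hu k).1
  have hnu : ∀ k : ℕ, ‖u‖ ≤ ‖u + k‖ := fun k => (aux_norm_add u hu k).2
  have hx0 : (0 : ℝ) < ‖u‖ := by
    have := Complex.re_le_norm u
    linarith
  have hdenpos : ∀ k : ℕ, (0 : ℝ) < ‖u‖ + k := fun k => by positivity
  have hpos : ∀ k : ℕ, (0 : ℝ) < ‖u + k‖ := fun k => by
    have h := hre k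
    have : (0:ℝ) < 1 + (k:ℝ) := by positivity
    linarith
  have hne : ∀ k : ℕ, u + (k : ℂ) ≠ 0 := fun k => norm_pos_iff.mp (hpos k)
  have hhalf : ∀ k : ℕ, (‖u‖ + k) / 2 ≤ ‖u + k‖ := fun k => by
    have := hre k; have := hnu k; linarith
  have hinv : ∀ k : ℕ, N ≤ k → ‖(u + (k : ℂ))⁻¹‖ ≤ 2 / (‖u‖ + N) := by
    intro k hk
    rw [norm_inv]
    have hNk : (N : ℝ) ≤ k := Nat.cast_le.mpr hk
    have h1 : (‖u‖ + N) / 2 ≤ ‖u + k‖ := by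
      have := hhalf k; linarith
    calc ‖u + (k:ℂ)‖⁻¹ ≤ ((‖u‖ + N) / 2)⁻¹ := inv_anti₀ (by positivity) h1
      _ = 2 / (‖u‖ + N) := by rw [inv_div]
  rcases le_or_gt M N with hMN | hNM
  · rw [Finset.Ico_eq_empty (by omega)]
    simp only [Finset.sum_empty, norm_zero]
    positivity
  · have habel := Finset.sum_Ico_by_parts (fun i : ℕ => (u + (i : ℂ))⁻¹)
      (fun i : ℕ => z ^ i) hNM
    simp only [smul_eq_mul] at habel
    have hrw : ∑ k ∈ Finset.Ico N M, z ^ k / (u + k)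
        = ∑ i ∈ Finset.Ico N M, (u + (i : ℂ))⁻¹ * z ^ i := by
      refine Finset.sum_congr rfl fun k _ => ?_
      rw [div_eq_mul_inv, mul_comm]
    rw [hrw, habel]
    set G : ℕ → ℂ := fun P => ∑ i ∈ Finset.range P, z ^ i with hG
    set T : ℂ := ∑ i ∈ Finset.Ico N (M - 1),
      ((u + ((i + 1 : ℕ) : ℂ))⁻¹ - (u + (i : ℂ))⁻¹) * G (i + 1) with hTdef
    have hGb : ∀ P, ‖G P‖ ≤ B := hB
    have hT : ‖T‖ ≤ 4 * B * ((‖u‖ + (N:ℝ))⁻¹ - (‖u‖ + ((M-1 : ℕ):ℝ))⁻¹) := by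
      rw [hTdef]
      calc ‖∑ i ∈ Finset.Ico N (M - 1),
          ((u + ((i + 1 : ℕ) : ℂ))⁻¹ - (u + (i : ℂ))⁻¹) * G (i + 1)‖
          ≤ ∑ i ∈ Finset.Ico N (M - 1),
            ‖((u + ((i + 1 : ℕ) : ℂ))⁻¹ - (u + (i : ℂ))⁻¹) * G (i + 1)‖ :=
          norm_sum_le _ _
        _ ≤ ∑ i ∈ Finset.Ico N (M - 1),
            (4 * B) * ((‖u‖ + (i:ℝ))⁻¹ - (‖u‖ + ((i+1 : ℕ):ℝ))⁻¹) := by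
          refine Finset.sum_le_sum fun i _ => ?_
          rw [norm_mul]
          have h1 := hne i
          have h2 := hne (i + 1)
          have hid : (u + ((i + 1 : ℕ) : ℂ))⁻¹ - (u + (i : ℂ))⁻¹
              = -(((u + (i : ℂ)) * (u + ((i + 1 : ℕ) : ℂ)))⁻¹) := by
            push_cast at h2 ⊢
            field_simp
            ring
          have hd : ‖(u + ((i + 1 : ℕ) : ℂ))⁻¹ - (u + (i : ℂ))⁻¹‖
              = (‖u + (i:ℂ)‖ * ‖u + ((i+1:ℕ):ℂ)‖)⁻¹ := by
            rw [hid, norm_neg, norm_inv, norm_mul]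
          have hp1 := hhalf i
          have hp2 := hhalf (i + 1)
          have hprod : ((‖u‖ + (i:ℝ)) / 2) * ((‖u‖ + ((i+1:ℕ):ℝ)) / 2)
              ≤ ‖u + (i:ℂ)‖ * ‖u + ((i+1:ℕ):ℂ)‖ :=
            mul_le_mul hp1 hp2 (by positivity) (norm_nonneg _)
          have hdi : (0:ℝ) < ‖u‖ + (i:ℝ) := hdenpos i
          have hdi1 : (0:ℝ) < ‖u‖ + ((i+1:ℕ):ℝ) := hdenpos (i+1)
          have hid2 : (‖u‖ + (i:ℝ))⁻¹ - (‖u‖ + ((i+1:ℕ):ℝ))⁻¹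
              = ((‖u‖ + (i:ℝ)) * (‖u‖ + ((i+1:ℕ):ℝ)))⁻¹ := by
            push_cast
            rw [← add_assoc]
            exact aux_inv_sub _ hdi
          have hstep : (‖u + (i:ℂ)‖ * ‖u + ((i+1:ℕ):ℂ)‖)⁻¹
              ≤ 4 * ((‖u‖ + (i:ℝ)) * (‖u‖ + ((i+1:ℕ):ℝ)))⁻¹ := by
            have h4 : (0:ℝ) < ((‖u‖ + (i:ℝ)) / 2) * ((‖u‖ + ((i+1:ℕ):ℝ)) / 2) := by positivity
            calc (‖u + (i:ℂ)‖ * ‖u + ((i+1:ℕ):ℂ)‖)⁻¹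
                ≤ (((‖u‖ + (i:ℝ)) / 2) * ((‖u‖ + ((i+1:ℕ):ℝ)) / 2))⁻¹ :=
                inv_anti₀ h4 hprod
              _ = 4 * ((‖u‖ + (i:ℝ)) * (‖u‖ + ((i+1:ℕ):ℝ)))⁻¹ := by
                rw [div_mul_div_comm, inv_div, div_eq_mul_inv]
                norm_num
          calc ‖(u + ((i + 1 : ℕ) : ℂ))⁻¹ - (u + (i : ℂ))⁻¹‖ * ‖G (i+1)‖
              = (‖u + (i:ℂ)‖ * ‖u + ((i+1:ℕ):ℂ)‖)⁻¹ * ‖G (i+1)‖ := by rw [hd]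
            _ ≤ (4 * ((‖u‖ + (i:ℝ)) * (‖u‖ + ((i+1:ℕ):ℝ)))⁻¹) * B :=
              mul_le_mul hstep (hGb _) (norm_nonneg _) (by positivity)
            _ = (4 * B) * ((‖u‖ + (i:ℝ))⁻¹ - (‖u‖ + ((i+1:ℕ):ℝ))⁻¹) := by
              rw [hid2, mul_inv]; ring
        _ = (4 * B) * ∑ i ∈ Finset.Ico N (M - 1),
            ((‖u‖ + (i:ℝ))⁻¹ - (‖u‖ + ((i+1 : ℕ):ℝ))⁻¹) := by rw [Finset.mul_sum]
        _ = 4 * B * ((‖u‖ + (N:ℝ))⁻¹ - (‖u‖ + ((M-1 : ℕ):ℝ))⁻¹) := by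
          congr 1
          rw [Finset.sum_Ico_eq_sub _ (by omega : N ≤ M - 1)]
          have h1 := Finset.sum_range_sub' (fun i : ℕ => (‖u‖ + (i:ℝ))⁻¹) (M-1)
          have h2 := Finset.sum_range_sub' (fun i : ℕ => (‖u‖ + (i:ℝ))⁻¹) N
          push_cast at h1 h2 ⊢
          rw [h1, h2]
          ring
    have hT' : ‖T‖ ≤ 4 * B / (‖u‖ + N) := by
      refine hT.trans ?_
      have h5 : (0:ℝ) ≤ (‖u‖ + ((M-1:ℕ):ℝ))⁻¹ := by positivity
      have h6 : (‖u‖+(N:ℝ))⁻¹ - (‖u‖+((M-1:ℕ):ℝ))⁻¹ ≤ (‖u‖+(N:ℝ))⁻¹ := by linarith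
      calc 4 * B * ((‖u‖ + (N:ℝ))⁻¹ - (‖u‖ + ((M-1 : ℕ):ℝ))⁻¹)
          ≤ 4 * B * (‖u‖+(N:ℝ))⁻¹ := by
            apply mul_le_mul_of_nonneg_left h6 (by positivity)
        _ = 4 * B / (‖u‖ + N) := by rw [div_eq_mul_inv]
    have h1 : ‖(u + ((M-1:ℕ):ℂ))⁻¹ * G M‖ ≤ (2/(‖u‖+N)) * B := by
      rw [norm_mul]
      exact mul_le_mul (hinv (M-1) (by omega)) (hGb M) (norm_nonneg _) (by positivity)
    have h2 : ‖(u + (N:ℂ))⁻¹ * G N‖ ≤ (2/(‖u‖+N)) * B := by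
      rw [norm_mul]
      exact mul_le_mul (hinv N le_rfl) (hGb N) (norm_nonneg _) (by positivity)
    have hfin := norm_sub_le ((u + ((M-1:ℕ):ℂ))⁻¹ * G M - (u + (N:ℂ))⁻¹ * G N) T
    have hfin2 := norm_sub_le ((u + ((M-1:ℕ):ℂ))⁻¹ * G M) ((u + (N:ℂ))⁻¹ * G N)
    have heq : B * (8/(‖u‖+N)) = (2/(‖u‖+N))*B + (2/(‖u‖+N))*B + 4*B/(‖u‖+N) := by ring
    linarith

set_option maxHeartbeats 1600000 in
/-- For `f` entire with `f(0)=0`, the series `∑_{k≥0} f(λ^k w)/(u+k)`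
converges uniformly on compact subsets of `{Re u > 1, |w| ≤ δ}` and its sum is
bounded by `C(δ)/|u|` there. -/
theorem stmt5 (θ : ℝ) (l : ℂ) (hl : l = Complex.exp (2 * Real.pi * Complex.I * θ))
    (hdio : ∃ c r : ℝ, 0 < c ∧ 0 < r ∧ ∀ n : ℕ, 1 ≤ n →
      c * (n : ℝ) ^ (-r) ≤ ‖l ^ n - 1‖)
    (f : ℂ → ℂ) (hf : Differentiable ℂ f) (hf0 : f 0 = 0)
    (δ : ℝ) (hδ : 0 < δ) :
    ∃ S : ℂ × ℂ → ℂ, ∃ C : ℝ, 0 < C ∧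
      (∀ K : Set (ℂ × ℂ), IsCompact K → K ⊆ {p : ℂ × ℂ | 1 < p.1.re ∧ ‖p.2‖ ≤ δ} →
        TendstoUniformlyOn
          (fun (N : ℕ) (p : ℂ × ℂ) => ∑ k ∈ Finset.range N, f (l ^ k * p.2) / (p.1 + k))
          S atTop K) ∧
      (∀ p : ℂ × ℂ, 1 < p.1.re → ‖p.2‖ ≤ δ → ‖S p‖ ≤ C / ‖p.1‖) := by
  obtain ⟨c, r, hc, hr, hdi⟩ := hdio
  have hl1 : ‖l‖ = 1 := by
    rw [hl, Complex.norm_exp]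
    have hre0 : (2 * ↑Real.pi * Complex.I * ↑θ).re = 0 := by
      simp [Complex.mul_re, Complex.mul_im]
    rw [hre0, Real.exp_zero]
  set m : ℕ := ⌈r⌉₊ with hm
  have hm1 : 1 ≤ m := Nat.one_le_ceil_iff.mpr hr
  have hgeo : ∀ j : ℕ, 1 ≤ j → ∀ P : ℕ,
      ‖∑ i ∈ Finset.range P, (l ^ j) ^ i‖ ≤ 2 * (j:ℝ) ^ m / c := by
    intro j hj P
    have hj0 : (0:ℝ) < (j:ℝ) := by exact_mod_cast hj
    have hjr : c * (j:ℝ) ^ (-r) ≤ ‖l ^ j - 1‖ := hdi j hj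
    have hrp : (0:ℝ) < (j:ℝ) ^ (-r) := Real.rpow_pos_of_pos hj0 _
    have hposd : (0:ℝ) < c * (j:ℝ) ^ (-r) := by positivity
    have hne : l ^ j ≠ 1 := by
      intro h
      rw [h, sub_self, norm_zero] at hjr
      linarith
    rw [geom_sum_eq hne]
    have hnum : ‖(l ^ j) ^ P - 1‖ ≤ 2 := by
      calc ‖(l ^ j) ^ P - 1‖ ≤ ‖(l ^ j) ^ P‖ + ‖(1:ℂ)‖ := norm_sub_le _ _
        _ = 2 := by rw [norm_pow, norm_pow, hl1]; norm_num
    have h2 : (j:ℝ) ^ r ≤ (j:ℝ) ^ m := by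
      have h1 : (1:ℝ) ≤ (j:ℝ) := by exact_mod_cast hj
      have := Real.rpow_le_rpow_of_exponent_le h1 (Nat.le_ceil r)
      rwa [Real.rpow_natCast] at this
    calc ‖((l ^ j) ^ P - 1) / (l ^ j - 1)‖ = ‖(l ^ j) ^ P - 1‖ / ‖l ^ j - 1‖ := norm_div _ _
      _ ≤ 2 / (c * (j:ℝ) ^ (-r)) := div_le_div₀ (by norm_num) hnum hposd hjr
      _ = 2 * (j:ℝ) ^ r / c := by
          rw [Real.rpow_neg hj0.le]
          have hjrne : (j:ℝ) ^ r ≠ 0 := ne_of_gt (Real.rpow_pos_of_pos hj0 r)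
          field_simp
      _ ≤ 2 * (j:ℝ) ^ m / c := by gcongr
  -- power series of f
  obtain ⟨p, hps⟩ : ∃ p : FormalMultilinearSeries ℂ ℂ ℂ, HasFPowerSeriesOnBall f p 0 ⊤ :=
    ⟨_, hf.hasFPowerSeriesOnBall 0 one_pos⟩
  have hrad : p.radius = ⊤ := top_le_iff.mp hps.r_le
  have hseries : ∀ z : ℂ, HasSum (fun j : ℕ => z ^ j • p.coeff j) (f z) := by
    intro z
    have hmem : z ∈ EMetric.ball (0:ℂ) ⊤ := EMetric.mem_ball.mpr (edist_lt_top _ _)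
    have := hps.hasSum hmem
    simp only [zero_add] at this
    simpa only [FormalMultilinearSeries.apply_eq_pow_smul_coeff] using this
  have hc0 : p.coeff 0 = 0 := by
    have h := hps.coeff_zero (fun _ => 1)
    rw [hf0] at h
    exact h
  obtain ⟨a, ha, Ca, hCa, hcoef⟩ := p.norm_mul_pow_le_mul_pow_of_lt_radius
    (r := ⟨δ, hδ.le⟩) (by rw [hrad]; exact ENNReal.coe_lt_top)
  have hcoef' : ∀ n : ℕ, ‖p.coeff n‖ * δ ^ n ≤ Ca * a ^ n := by
    intro n
    have := hcoef n
    rwa [FormalMultilinearSeries.norm_apply_eq_norm_coef] at this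
  have hA : Summable (fun j : ℕ => ‖p.coeff j‖ * δ ^ j * (j:ℝ) ^ m) := by
    have hsum : Summable (fun j : ℕ => Ca * ((j:ℝ) ^ m * a ^ j)) :=
      (summable_pow_mul_geometric_of_norm_lt_one m
        (by rw [Real.norm_eq_abs, abs_of_pos ha.1]; exact ha.2)).mul_left Ca
    refine Summable.of_nonneg_of_le (fun j => by positivity) (fun j => ?_) hsum
    calc ‖p.coeff j‖ * δ ^ j * (j:ℝ) ^ m ≤ (Ca * a ^ j) * (j:ℝ) ^ m :=
        mul_le_mul_of_nonneg_right (hcoef' j) (by positivity)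
      _ = Ca * ((j:ℝ) ^ m * a ^ j) := by ring
  set A : ℝ := ∑' j : ℕ, ‖p.coeff j‖ * δ ^ j * (j:ℝ) ^ m with hAdef
  have hA0 : 0 ≤ A := tsum_nonneg (fun j => by positivity)
  have hkey : ∀ u : ℂ, 1 ≤ u.re → ∀ j : ℕ, 1 ≤ j → ∀ N M : ℕ,
      ‖∑ k ∈ Finset.Ico N M, (l ^ j) ^ k / (u + k)‖
        ≤ (2 * (j:ℝ) ^ m / c) * (8 / (‖u‖ + N)) :=
    fun u hu j hj N M => aux_abel (l ^ j) _ (hgeo j hj) u hu N M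
  -- main estimate
  have hmain : ∀ u w : ℂ, 1 ≤ u.re → ‖w‖ ≤ δ → ∀ N M : ℕ,
      ‖∑ k ∈ Finset.Ico N M, f (l ^ k * w) / (u + k)‖ ≤ (16 * A / c) / (‖u‖ + N) := by
    intro u w hu hw N M
    have hx0 : (0:ℝ) < ‖u‖ := by
      have := Complex.re_le_norm u
      linarith
    have hdN : (0:ℝ) < ‖u‖ + N := by positivity
    have hk : ∀ k : ℕ, HasSum (fun j : ℕ => (l ^ k * w) ^ j • p.coeff j / (u + k))
        (f (l ^ k * w) / (u + k)) := fun k => (hseries _).div_const _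
    have hS : HasSum (fun j : ℕ => ∑ k ∈ Finset.Ico N M, (l ^ k * w) ^ j • p.coeff j / (u + k))
        (∑ k ∈ Finset.Ico N M, f (l ^ k * w) / (u + k)) := hasSum_sum fun k _ => hk k
    have hfun : (fun j : ℕ => ∑ k ∈ Finset.Ico N M, (l ^ k * w) ^ j • p.coeff j / (u + k))
        = fun j : ℕ => (p.coeff j * w ^ j) * ∑ k ∈ Finset.Ico N M, (l ^ j) ^ k / (u + k) := by
      funext j
      rw [Finset.mul_sum]
      refine Finset.sum_congr rfl fun k _ => ?_
      have hpow : (l ^ k * w) ^ j = (l ^ j) ^ k * w ^ j := by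
        rw [mul_pow, ← pow_mul, ← pow_mul, mul_comm k j]
      rw [smul_eq_mul, hpow]
      ring
    rw [hfun] at hS
    rw [← hS.tsum_eq]
    have hb : ∀ j : ℕ, ‖(p.coeff j * w ^ j) * ∑ k ∈ Finset.Ico N M, (l ^ j) ^ k / (u + k)‖
        ≤ (‖p.coeff j‖ * δ ^ j * (j:ℝ) ^ m) * (16 / c / (‖u‖ + N)) := by
      intro j
      rcases Nat.eq_zero_or_pos j with h0 | h1
      · subst h0
        simp [hc0]
      · calc ‖(p.coeff j * w ^ j) * ∑ k ∈ Finset.Ico N M, (l ^ j) ^ k / (u + k)‖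
            = ‖p.coeff j‖ * ‖w‖ ^ j * ‖∑ k ∈ Finset.Ico N M, (l ^ j) ^ k / (u + k)‖ := by
              rw [norm_mul, norm_mul, norm_pow]
          _ ≤ (‖p.coeff j‖ * δ ^ j) * ((2 * (j:ℝ) ^ m / c) * (8 / (‖u‖ + N))) := by
              apply mul_le_mul
              · exact mul_le_mul_of_nonneg_left (pow_le_pow_left₀ (norm_nonneg w) hw j)
                  (norm_nonneg _)
              · exact hkey u hu j h1 N M
              · exact norm_nonneg _
              · positivity
          _ = (‖p.coeff j‖ * δ ^ j * (j:ℝ) ^ m) * (16 / c / (‖u‖ + N)) := by ring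
    have hbsum : Summable
        (fun j : ℕ => (‖p.coeff j‖ * δ ^ j * (j:ℝ) ^ m) * (16 / c / (‖u‖ + N))) :=
      hA.mul_right _
    have hnsum : Summable
        (fun j : ℕ => ‖(p.coeff j * w ^ j) * ∑ k ∈ Finset.Ico N M, (l ^ j) ^ k / (u + k)‖) :=
      Summable.of_nonneg_of_le (fun _ => norm_nonneg _) hb hbsum
    calc ‖∑' j : ℕ, (p.coeff j * w ^ j) * ∑ k ∈ Finset.Ico N M, (l ^ j) ^ k / (u + k)‖
        ≤ ∑' j : ℕ, ‖(p.coeff j * w ^ j) * ∑ k ∈ Finset.Ico N M, (l ^ j) ^ k / (u + k)‖ :=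
          norm_tsum_le_tsum_norm hnsum
      _ ≤ ∑' j : ℕ, (‖p.coeff j‖ * δ ^ j * (j:ℝ) ^ m) * (16 / c / (‖u‖ + N)) :=
          Summable.tsum_le_tsum hb hnsum hbsum
      _ = A * (16 / c / (‖u‖ + N)) := by rw [tsum_mul_right]
      _ = (16 * A / c) / (‖u‖ + N) := by ring
  -- final assembly
  set F : ℕ → ℂ × ℂ → ℂ :=
    fun N q => ∑ k ∈ Finset.range N, f (l ^ k * q.2) / (q.1 + k) with hF
  have hnormre : ∀ q : ℂ × ℂ, 1 < q.1.re → (1:ℝ) ≤ ‖q.1‖ := by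
    intro q hq
    have := Complex.re_le_norm q.1
    linarith
  have hball : ∀ q : ℂ × ℂ, 1 < q.1.re → ‖q.2‖ ≤ δ → ∀ N M : ℕ, N ≤ M →
      ‖F M q - F N q‖ ≤ (16 * A / c) / (1 + N) := by
    intro q hq hw N M hNM
    have hFdiff : F M q - F N q = ∑ k ∈ Finset.Ico N M, f (l ^ k * q.2) / (q.1 + k) := by
      simp only [hF]
      rw [Finset.sum_Ico_eq_sub _ hNM]
    rw [hFdiff]
    refine (hmain q.1 q.2 hq.le hw N M).trans ?_
    have hx1 := hnormre q hq
    gcongr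
  have htend0 : Tendsto (fun N : ℕ => (16 * A / c) / (1 + (N:ℝ))) atTop (𝓝 0) := by
    have heq : (fun N : ℕ => (16 * A / c) / (1 + (N:ℝ)))
        = fun N : ℕ => (16 * A / c) * (1 / ((N:ℝ) + 1)) := by
      funext N
      rw [mul_one_div, add_comm]
    rw [heq]
    simpa using tendsto_one_div_add_atTop_nhds_zero_nat.const_mul (16 * A / c)
  have hcauchy : ∀ q : ℂ × ℂ, 1 < q.1.re → ‖q.2‖ ≤ δ → CauchySeq (fun N => F N q) := by
    intro q hq hw
    apply cauchySeq_of_le_tendsto_0 (fun N : ℕ => (16 * A / c) / (1 + (N:ℝ))) _ htend0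
    intro n1 n2 NN h1 h2
    have hmono : ∀ n1 n2 : ℕ, n1 ≤ n2 → dist (F n1 q) (F n2 q) ≤ (16 * A / c) / (1 + (n1:ℝ)) := by
      intro n1 n2 hle
      rw [dist_eq_norm, norm_sub_rev]
      exact hball q hq hw n1 n2 hle
    have hred : ∀ n : ℕ, NN ≤ n → (16 * A / c) / (1 + (n:ℝ)) ≤ (16 * A / c) / (1 + (NN:ℝ)) := by
      intro n hn
      gcongr
    rcases le_total n1 n2 with h | h
    · exact (hmono n1 n2 h).trans (hred n1 h1)
    · rw [dist_comm]
      exact (hmono n2 n1 h).trans (hred n2 h2)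
  set S : ℂ × ℂ → ℂ := fun q => limUnder atTop (fun N => F N q) with hSdef
  have hlim : ∀ q : ℂ × ℂ, 1 < q.1.re → ‖q.2‖ ≤ δ →
      Tendsto (fun N => F N q) atTop (𝓝 (S q)) :=
    fun q hq hw => (hcauchy q hq hw).tendsto_limUnder
  set C : ℝ := 16 * (A + 1) / c with hC
  have hCpos : 0 < C := by rw [hC]; positivity
  refine ⟨S, C, hCpos, ?_, ?_⟩
  · intro K hK hKsub
    have hU : TendstoUniformlyOn F S atTop {q : ℂ × ℂ | 1 < q.1.re ∧ ‖q.2‖ ≤ δ} := by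
      rw [Metric.tendstoUniformlyOn_iff]
      intro ε hε
      filter_upwards [htend0.eventually (gt_mem_nhds hε)] with N hN q hq
      have hd : dist (S q) (F N q) ≤ (16 * A / c) / (1 + (N:ℝ)) := by
        have hev : ∀ᶠ M in atTop, dist (F M q) (F N q) ≤ (16 * A / c) / (1 + (N:ℝ)) := by
          filter_upwards [eventually_ge_atTop N] with M hM
          rw [dist_eq_norm]
          exact hball q hq.1 hq.2 N M hM
        have hten : Tendsto (fun M => dist (F M q) (F N q)) atTop
            (𝓝 (dist (S q) (F N q))) :=
          (hlim q hq.1 hq.2).dist tendsto_const_nhds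
        exact le_of_tendsto hten hev
      exact lt_of_le_of_lt hd hN
    exact hU.mono hKsub
  · intro q hq hw
    have hx1 := hnormre q hq
    have hx0 : (0:ℝ) < ‖q.1‖ := by linarith
    have hbM : ∀ M : ℕ, ‖F M q‖ ≤ (16 * A / c) / ‖q.1‖ := by
      intro M
      have h := hmain q.1 q.2 hq.le hw 0 M
      simp only [Nat.cast_zero, add_zero] at h
      simp only [hF, Finset.range_eq_Ico]
      exact h
    have hSb : ‖S q‖ ≤ (16 * A / c) / ‖q.1‖ :=
      le_of_tendsto (hlim q hq hw).norm (Eventually.of_forall hbM)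
    refine hSb.trans ?_
    rw [hC]
    gcongr
    · linarith
end

section
/- Let λ = e^{2πiθ} with θ Diophantine and let f be entire with f(0)=0. For every δ > 0 there exists R > 0 such that the map τ(u,w) = (u − ∑_{k=0}^{∞} f(λ^k w)/(u+k), w) is injective on the set {(u,w) : Re(u) > R, |w| < δ}. -/
open Filter

theorem sum_inv_sq_le (R : ℝ) (hR : 1 < R) (N : ℕ) :
    ∑ k ∈ Finset.range N, (1:ℝ)/((R+k)*(R+k)) ≤ 1/(R-1) := by
  have h0 : ∀ k : ℕ, (0:ℝ) < R - 1 + k := fun k => by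
    have := (Nat.cast_nonneg k : (0:ℝ) ≤ k); linarith
  have h1 : ∀ k : ℕ, (0:ℝ) < R + k := fun k => by
    have := (Nat.cast_nonneg k : (0:ℝ) ≤ k); linarith
  have key : ∑ k ∈ Finset.range N, (1:ℝ)/((R+k)*(R+k)) ≤
      ∑ k ∈ Finset.range N, ((fun k : ℕ => 1/(R-1+k)) k - (fun k : ℕ => 1/(R-1+k)) (k+1)) := by
    apply Finset.sum_le_sum
    intro k _
    have hk1 : (R - 1 + (↑(k+1):ℝ)) = R + k := by push_cast; ring
    simp only [hk1]
    rw [div_sub_div _ _ (h0 k).ne' (h1 k).ne', one_mul, mul_one,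
      show R + ↑k - (R - 1 + ↑k) = (1:ℝ) by ring]
    apply div_le_div_of_nonneg_left zero_le_one (mul_pos (h0 k) (h1 k))
    · exact mul_le_mul_of_nonneg_right (by linarith [(Nat.cast_nonneg k : (0:ℝ) ≤ k)]) (h1 k).le
  refine key.trans ?_
  rw [Finset.sum_range_sub' (fun k : ℕ => 1/(R-1+(k:ℝ))) N]
  have : (0:ℝ) ≤ 1/(R-1+N) := le_of_lt (div_pos one_pos (h0 N))
  simp only [Nat.cast_zero, add_zero]
  linarith

/-- For `f` entire with `f(0)=0`, the map
`τ(u,w) = (u − ∑_{k≥0} f(λ^k w)/(u+k), w)` is injective on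
`{Re u > R, |w| < δ}` for `R` large. -/
theorem stmt6 (θ : ℝ) (l : ℂ) (hl : l = Complex.exp (2 * Real.pi * Complex.I * θ))
    (hdio : ∃ c r : ℝ, 0 < c ∧ 0 < r ∧ ∀ n : ℕ, 1 ≤ n →
      c * (n : ℝ) ^ (-r) ≤ ‖l ^ n - 1‖)
    (f : ℂ → ℂ) (hf : Differentiable ℂ f) (hf0 : f 0 = 0)
    (S : ℂ × ℂ → ℂ)
    (hS : ∀ p : ℂ × ℂ, 1 < p.1.re →
      Tendsto (fun N : ℕ => ∑ k ∈ Finset.range N, f (l ^ k * p.2) / (p.1 + k))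
        atTop (nhds (S p)))
    (δ : ℝ) (hδ : 0 < δ) :
    ∃ R : ℝ, 0 < R ∧
      Set.InjOn (fun p : ℂ × ℂ => (p.1 - S p, p.2))
        {p : ℂ × ℂ | R < p.1.re ∧ ‖p.2‖ < δ} := by
  -- norm of l is 1
  have hlnorm : ‖l‖ = 1 := by
    rw [hl, Complex.norm_exp]
    have : (2 * (Real.pi:ℂ) * Complex.I * (θ:ℂ)).re = 0 := by
      simp [Complex.mul_re, Complex.mul_im]
    rw [this, Real.exp_zero]
  -- bound for f on closed ball
  obtain ⟨C, hC⟩ := (isCompact_closedBall (0:ℂ) δ).exists_bound_of_continuousOn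
    hf.continuous.continuousOn
  set M : ℝ := max C 0 with hM
  have hM0 : 0 ≤ M := le_max_right _ _
  have hCb : ∀ z : ℂ, ‖z‖ ≤ δ → ‖f z‖ ≤ M := by
    intro z hz
    exact (hC z (by simpa [Metric.mem_closedBall, dist_eq_norm] using hz)).trans (le_max_left _ _)
  set R : ℝ := 2 * M + 2 with hR
  have hR1 : 1 < R := by linarith
  refine ⟨R, by linarith, ?_⟩
  rintro p ⟨hp1, hp2⟩ q ⟨hq1, hq2⟩ heq
  simp only [Prod.mk.injEq] at heq
  obtain ⟨h1, h2⟩ := heq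
  have hpre : 1 < p.1.re := lt_trans hR1 hp1
  have hqre : 1 < q.1.re := lt_trans hR1 hq1
  -- difference of partial sums tends to S p - S q
  have T : Tendsto (fun N : ℕ => ∑ k ∈ Finset.range N,
      (f (l ^ k * p.2) / (p.1 + k) - f (l ^ k * p.2) / (q.1 + k))) atTop
      (nhds (S p - S q)) := by
    have := (hS p hpre).sub (hS q hqre)
    simp only [← Finset.sum_sub_distrib] at this
    convert this using 2 with N
    apply Finset.sum_congr rfl
    intro k _
    rw [h2]
  -- norm bounds on denominators
  have hden : ∀ (u : ℂ), R < u.re → ∀ k : ℕ, R + k ≤ ‖u + k‖ ∧ (0:ℝ) < R + k := by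
    intro u hu k
    have hk0 : (0:ℝ) ≤ k := Nat.cast_nonneg k
    have hre : R + k ≤ (u + k).re := by
      simp only [Complex.add_re, Complex.natCast_re]
      linarith
    refine ⟨hre.trans ?_, by linarith⟩
    exact Complex.re_le_norm _
  -- bound on ‖l^k * p.2‖
  have hlk : ∀ k : ℕ, ‖l ^ k * p.2‖ ≤ δ := by
    intro k
    rw [norm_mul, norm_pow, hlnorm, one_pow, one_mul]
    exact hp2.le
  set d : ℂ := p.1 - q.1 with hd
  -- per-term bound
  have hterm : ∀ k : ℕ, ‖f (l ^ k * p.2) / (p.1 + k) - f (l ^ k * p.2) / (q.1 + k)‖ ≤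
      (M * ‖d‖) * (1/((R+k)*(R+k))) := by
    intro k
    obtain ⟨hpk1, hpk0⟩ := hden p.1 hp1 k
    obtain ⟨hqk1, _⟩ := hden q.1 hq1 k
    have hpne : (p.1 + (k:ℂ)) ≠ 0 := by
      rw [← norm_ne_zero_iff]; exact ne_of_gt (lt_of_lt_of_le hpk0 hpk1)
    have hqne : (q.1 + (k:ℂ)) ≠ 0 := by
      rw [← norm_ne_zero_iff]; exact ne_of_gt (lt_of_lt_of_le hpk0 hqk1)
    rw [div_sub_div _ _ hpne hqne,
      show f (l ^ k * p.2) * (q.1 + ↑k) - (p.1 + ↑k) * f (l ^ k * p.2)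
        = f (l ^ k * p.2) * (q.1 - p.1) by ring,
      norm_div, norm_mul, mul_one_div]
    have hnum : ‖f (l ^ k * p.2)‖ * ‖q.1 - p.1‖ ≤ M * ‖d‖ := by
      rw [hd, norm_sub_rev]
      exact mul_le_mul_of_nonneg_right (hCb _ (hlk k)) (norm_nonneg _)
    have hden2 : (R+k)*(R+k) ≤ ‖(p.1 + ↑k) * (q.1 + ↑k)‖ := by
      rw [norm_mul]
      exact mul_le_mul hpk1 hqk1 hpk0.le (le_trans hpk0.le hpk1)
    exact div_le_div₀ (by positivity) hnum (mul_pos hpk0 hpk0) hden2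
  -- bound on partial sums
  have hbound : ∀ N : ℕ, ‖∑ k ∈ Finset.range N,
      (f (l ^ k * p.2) / (p.1 + k) - f (l ^ k * p.2) / (q.1 + k))‖ ≤
      (M * ‖d‖) * (1/(R-1)) := by
    intro N
    calc ‖∑ k ∈ Finset.range N, (f (l ^ k * p.2) / (p.1 + k) - f (l ^ k * p.2) / (q.1 + k))‖
        ≤ ∑ k ∈ Finset.range N, ‖f (l ^ k * p.2) / (p.1 + k) - f (l ^ k * p.2) / (q.1 + k)‖ :=
          norm_sum_le _ _
      _ ≤ ∑ k ∈ Finset.range N, (M * ‖d‖) * (1/((R+k)*(R+k))) :=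
          Finset.sum_le_sum fun k _ => hterm k
      _ = (M * ‖d‖) * ∑ k ∈ Finset.range N, (1/((R+k)*(R+k))) := by
          rw [Finset.mul_sum]
      _ ≤ (M * ‖d‖) * (1/(R-1)) :=
          mul_le_mul_of_nonneg_left (sum_inv_sq_le R hR1 N) (by positivity)
  -- limit bound
  have hlim : ‖S p - S q‖ ≤ (M * ‖d‖) * (1/(R-1)) :=
    le_of_tendsto T.norm (Filter.Eventually.of_forall hbound)
  have hSd : S p - S q = d := by rw [hd]; linear_combination -h1
  rw [hSd] at hlim
  have hRm1 : R - 1 = 2*M + 1 := by rw [hR]; ring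
  have hdn : ‖d‖ = 0 := by
    by_contra hne
    have hpos : 0 < ‖d‖ := lt_of_le_of_ne (norm_nonneg _) (Ne.symm hne)
    rw [hRm1, mul_one_div] at hlim
    have h2M : (0:ℝ) < 2*M+1 := by linarith
    rw [le_div_iff₀ h2M] at hlim
    nlinarith
  have : d = 0 := norm_eq_zero.mp hdn
  have hpq : p.1 = q.1 := sub_eq_zero.mp (hd ▸ this)
  exact Prod.ext hpq h2
end

section
/- Let λ = e^{2πiθ} with θ Diophantine and let g be entire with g(0) = g'(0) = 0, g(w) = ∑_{ℓ≥2} d_ℓ w^ℓ. Define h(u,w) = λ^{−1} ∑_{ℓ=2}^{∞} d_ℓ w^ℓ ∑_{k=0}^{∞} λ^{(ℓ−1)k}/(u+k). Then for every δ > 0 there exists R > 0 such that the map Φ(u,w) = (u, w + h(u,w)) is injective on {(u,w) : Re(u) > R, |w| < δ}. -/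
open Filter Finset


lemma geomBound (μ : ℂ) (hμ : ‖μ‖ = 1) (hne : μ ≠ 1) (N : ℕ) :
    ‖∑ k ∈ Finset.range N, μ ^ k‖ ≤ 2 / ‖μ - 1‖ := by
  rw [geom_sum_eq hne, norm_div]
  gcongr
  calc ‖μ ^ N - 1‖ ≤ ‖μ ^ N‖ + ‖(1:ℂ)‖ := norm_sub_le _ _
    _ = 2 := by simp [norm_pow, hμ]; norm_num

lemma powDiffBound (w w' : ℂ) (δ : ℝ) (hw : ‖w‖ ≤ δ) (hw' : ‖w'‖ ≤ δ) (ℓ : ℕ) (hℓ : 1 ≤ ℓ) :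
    ‖w ^ ℓ - w' ^ ℓ‖ ≤ ℓ * δ ^ (ℓ - 1) * ‖w - w'‖ := by
  have hδ : (0:ℝ) ≤ δ := le_trans (norm_nonneg w) hw
  rw [← geom_sum₂_mul w w' ℓ, norm_mul]
  gcongr with hfoo
  calc ‖∑ i ∈ Finset.range ℓ, w ^ i * w' ^ (ℓ - 1 - i)‖
      ≤ ∑ i ∈ Finset.range ℓ, ‖w ^ i * w' ^ (ℓ - 1 - i)‖ := norm_sum_le _ _
    _ ≤ ∑ i ∈ Finset.range ℓ, δ ^ (ℓ - 1) := by
        apply Finset.sum_le_sum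
        intro i hi
        rw [norm_mul, norm_pow, norm_pow]
        calc ‖w‖ ^ i * ‖w'‖ ^ (ℓ - 1 - i) ≤ δ ^ i * δ ^ (ℓ - 1 - i) := by
              gcongr
          _ = δ ^ (ℓ - 1) := by
              rw [← pow_add]
              congr 1
              have hi' : i ≤ ℓ - 1 := Nat.le_sub_one_of_lt (Finset.mem_range.mp hi)
              omega
    _ = ℓ * δ ^ (ℓ - 1) := by rw [Finset.sum_const, Finset.card_range, nsmul_eq_mul]


lemma abelBound (μ : ℂ) (M : ℝ) (hM0 : 0 ≤ M)
    (hM : ∀ N : ℕ, ‖∑ k ∈ Finset.range N, μ ^ k‖ ≤ M)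
    (u : ℂ) (hu : 1 < u.re) (N : ℕ) :
    ‖∑ k ∈ Finset.range N, μ ^ k / (u + k)‖ ≤ 2 * M / u.re := by
  have hx : (0:ℝ) < u.re := lt_trans one_pos hu
  have hre : ∀ k : ℕ, u.re + k ≤ ‖u + (k:ℂ)‖ := by
    intro k
    have h0 : (u + (k:ℂ)).re = u.re + k := by simp
    calc u.re + (k:ℝ) = (u + (k:ℂ)).re := h0.symm
      _ ≤ ‖u + (k:ℂ)‖ := Complex.re_le_norm _
  have hpos : ∀ k : ℕ, (0:ℝ) < u.re + k := fun k => by positivity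
  have hne : ∀ k : ℕ, u + (k:ℂ) ≠ 0 := by
    intro k h0
    have h1 := hre k
    rw [h0] at h1
    simp at h1
    nlinarith [hpos k]
  have hfnorm : ∀ k : ℕ, ‖(u + (k:ℂ))⁻¹‖ ≤ 1 / (u.re + k) := by
    intro k
    rw [norm_inv, one_div]
    exact inv_anti₀ (hpos k) (hre k)
  have hfb : ∀ k : ℕ, ‖(u + (k:ℂ))⁻¹‖ ≤ 1 / u.re := by
    intro k
    refine (hfnorm k).trans ?_
    apply one_div_le_one_div_of_le hx
    simp [Nat.cast_nonneg]
  set D : ℕ → ℝ := fun i => 1 / (u.re + i) - 1 / (u.re + ((i+1:ℕ):ℝ)) with hD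
  have hDnn : ∀ i : ℕ, 0 ≤ D i := by
    intro i
    have : 1 / (u.re + ((i+1:ℕ):ℝ)) ≤ 1 / (u.re + i) := by
      apply one_div_le_one_div_of_le (hpos i)
      push_cast; linarith
    simpa [hD] using this
  have hrw : ∑ k ∈ Finset.range N, μ ^ k / (u + k)
      = ∑ k ∈ Finset.range N, (fun k : ℕ => (u + (k:ℂ))⁻¹) k • μ ^ k := by
    apply Finset.sum_congr rfl
    intro k _
    rw [smul_eq_mul, div_eq_inv_mul]
  rw [hrw, Finset.sum_range_by_parts (fun k : ℕ => (u + (k:ℂ))⁻¹) (fun k => μ ^ k) N]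
  have hdiff : ∀ i : ℕ, ‖(u + ((i+1:ℕ):ℂ))⁻¹ - (u + (i:ℂ))⁻¹‖ ≤ D i := by
    intro i
    have ha := hne i
    have hb := hne (i+1)
    push_cast at hb ⊢
    have h1 : (u + ((i:ℂ) + 1))⁻¹ - (u + (i:ℂ))⁻¹
        = -((u + (i:ℂ))⁻¹ * (u + ((i:ℂ) + 1))⁻¹) := by
      field_simp
      ring
    rw [h1, norm_neg, norm_mul, norm_inv, norm_inv]
    have h2 : D i = (u.re + i)⁻¹ * (u.re + ((i:ℝ)+1))⁻¹ := by
      rw [hD]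
      have h3 := hpos i; have h4 := hpos (i+1); push_cast at h4
      push_cast
      field_simp
      ring
    rw [h2]
    have hb1 : u.re + ((i:ℝ)+1) ≤ ‖u + ((i:ℂ)+1)‖ := by
      have := hre (i+1); push_cast at this; exact this
    have h4 := hpos (i+1); push_cast at h4
    exact mul_le_mul (inv_anti₀ (hpos i) (hre i))
      (inv_anti₀ h4 hb1) (by positivity) (by positivity)
  calc ‖(fun k : ℕ => (u + (k:ℂ))⁻¹) (N-1) • ∑ i ∈ Finset.range N, μ ^ i
        - ∑ i ∈ Finset.range (N-1), ((fun k : ℕ => (u + (k:ℂ))⁻¹) (i+1) - (fun k : ℕ => (u + (k:ℂ))⁻¹) i) • ∑ j ∈ Finset.range (i+1), μ ^ j‖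
      ≤ ‖(u + ((N-1:ℕ):ℂ))⁻¹ • ∑ i ∈ Finset.range N, μ ^ i‖
        + ‖∑ i ∈ Finset.range (N-1), ((u + ((i+1:ℕ):ℂ))⁻¹ - (u + (i:ℂ))⁻¹) • ∑ j ∈ Finset.range (i+1), μ ^ j‖ := norm_sub_le _ _
    _ ≤ (1 / u.re) * M + ∑ i ∈ Finset.range (N-1), D i * M := by
        apply add_le_add
        · rw [norm_smul]
          exact mul_le_mul (hfb (N-1)) (hM N) (norm_nonneg _) (by positivity)
        · refine (norm_sum_le _ _).trans (Finset.sum_le_sum ?_)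
          intro i _
          rw [norm_smul]
          exact mul_le_mul (hdiff i) (hM (i+1)) (norm_nonneg _) (hDnn i)
    _ ≤ 2 * M / u.re := by
        rw [← Finset.sum_mul]
        have htel : ∑ i ∈ Finset.range (N-1), D i
            = 1 / (u.re + (0:ℕ)) - 1 / (u.re + ((N-1:ℕ):ℝ)) := by
          exact Finset.sum_range_sub' (fun i : ℕ => 1 / (u.re + i)) (N-1)
        rw [htel]
        have h1 : 0 ≤ 1 / (u.re + ((N-1:ℕ):ℝ)) := by positivity
        have h2 : (1 / (u.re + ((0:ℕ):ℝ)) - 1 / (u.re + ((N-1:ℕ):ℝ))) * M ≤ (1/u.re) * M := by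
          apply mul_le_mul_of_nonneg_right _ hM0
          simp only [Nat.cast_zero, add_zero]
          linarith
        calc 1 / u.re * M + (1 / (u.re + ((0:ℕ):ℝ)) - 1 / (u.re + ((N-1:ℕ):ℝ))) * M
            ≤ 1/u.re * M + 1/u.re * M := by linarith
          _ = 2 * M / u.re := by field_simp; ring


/-- For `g(w) = ∑_{ℓ≥2} d_ℓ w^ℓ` entire and
`h(u,w) = λ⁻¹ ∑_{ℓ≥2} d_ℓ w^ℓ ∑_{k≥0} λ^{(ℓ−1)k}/(u+k)`, the map
`Φ(u,w) = (u, w + h(u,w))` is injective on `{Re u > R, |w| < δ}` for `R` large. -/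
theorem stmt7 (θ : ℝ) (l : ℂ) (hl : l = Complex.exp (2 * Real.pi * Complex.I * θ))
    (hdio : ∃ c r : ℝ, 0 < c ∧ 0 < r ∧ ∀ n : ℕ, 1 ≤ n →
      c * (n : ℝ) ^ (-r) ≤ ‖l ^ n - 1‖)
    (d : ℕ → ℂ) (g : ℂ → ℂ)
    (hg : ∀ w : ℂ, HasSum (fun ℓ : ℕ => (if ℓ < 2 then 0 else d ℓ) * w ^ ℓ) (g w))
    (s : ℕ → ℂ → ℂ)
    (hs : ∀ ℓ : ℕ, 2 ≤ ℓ → ∀ u : ℂ, 1 < u.re →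
      Tendsto (fun N : ℕ => ∑ k ∈ Finset.range N, l ^ ((ℓ - 1) * k) / (u + k))
        atTop (nhds (s ℓ u)))
    (h : ℂ × ℂ → ℂ)
    (hh : ∀ u w : ℂ, 1 < u.re →
      HasSum (fun ℓ : ℕ => l⁻¹ * ((if ℓ < 2 then 0 else d ℓ) * w ^ ℓ * s ℓ u)) (h (u, w)))
    (δ : ℝ) (hδ : 0 < δ) :
    ∃ R : ℝ, 0 < R ∧
      Set.InjOn (fun p : ℂ × ℂ => (p.1, p.2 + h p))
        {p : ℂ × ℂ | R < p.1.re ∧ ‖p.2‖ < δ} := by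
  obtain ⟨c, r, hc, hr, hdio⟩ := hdio
  have hlnorm : ‖l‖ = 1 := by
    rw [hl, Complex.norm_exp]
    have h0 : (2 * (Real.pi:ℂ) * Complex.I * θ).re = 0 := by simp
    rw [h0, Real.exp_zero]
  -- bound on s
  have sBound : ∀ ℓ : ℕ, 2 ≤ ℓ → ∀ u : ℂ, 1 < u.re →
      ‖s ℓ u‖ ≤ (4 / c) * (ℓ:ℝ) ^ r / u.re := by
    intro ℓ hℓ u hu
    set m := ℓ - 1 with hm
    have hm1 : 1 ≤ m := by omega
    have hmd := hdio m hm1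
    have hmpos : (0:ℝ) < (m:ℝ) := by exact_mod_cast hm1
    have hmr : (0:ℝ) < c * (m:ℝ) ^ (-r) := by positivity
    have hμne : l ^ m ≠ 1 := by
      intro h0
      rw [h0] at hmd
      simp at hmd
      nlinarith
    have hμnorm : ‖l ^ m‖ = 1 := by rw [norm_pow, hlnorm, one_pow]
    have hMb : ∀ N : ℕ, ‖∑ k ∈ Finset.range N, (l ^ m) ^ k‖ ≤ (2 / c) * (ℓ:ℝ) ^ r := by
      intro N
      refine (geomBound (l ^ m) hμnorm hμne N).trans ?_
      have h1 : 2 / ‖l ^ m - 1‖ ≤ 2 / (c * (m:ℝ) ^ (-r)) := by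
        apply div_le_div_of_nonneg_left (by norm_num) hmr hmd
      refine h1.trans ?_
      rw [Real.rpow_neg hmpos.le]
      have h2 : (m:ℝ) ^ r ≤ (ℓ:ℝ) ^ r := by
        apply Real.rpow_le_rpow hmpos.le _ hr.le
        exact_mod_cast Nat.sub_le ℓ 1
      have h3 : (0:ℝ) < (m:ℝ) ^ r := Real.rpow_pos_of_pos hmpos r
      have heqq : 2 / (c * ((m:ℝ) ^ r)⁻¹) = 2 / c * (m:ℝ) ^ r := by
        field_simp
      rw [heqq]
      exact mul_le_mul_of_nonneg_left h2 (by positivity)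
    have habel := abelBound (l ^ m) ((2 / c) * (ℓ:ℝ) ^ r) (by positivity) hMb u hu
    have hlim := hs ℓ hℓ u hu
    have hlim' : Tendsto (fun N : ℕ => ‖∑ k ∈ Finset.range N, l ^ ((ℓ - 1) * k) / (u + k)‖)
        atTop (nhds ‖s ℓ u‖) := hlim.norm
    have hkey : ‖s ℓ u‖ ≤ 2 * ((2 / c) * (ℓ:ℝ) ^ r) / u.re := by
      apply le_of_tendsto hlim'
      filter_upwards with N
      have hrw : ∑ k ∈ Finset.range N, l ^ ((ℓ - 1) * k) / (u + k)
          = ∑ k ∈ Finset.range N, (l ^ m) ^ k / (u + k) := by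
        apply Finset.sum_congr rfl
        intro k _
        rw [← pow_mul, hm]
      rw [hrw]
      exact habel N
    refine hkey.trans (le_of_eq ?_)
    ring
  -- coefficient bound
  have hgs : Summable (fun ℓ : ℕ => (if ℓ < 2 then 0 else d ℓ) * ((2*δ:ℝ):ℂ) ^ ℓ) :=
    (hg _).summable
  have htend : Tendsto (fun ℓ : ℕ => ‖(if ℓ < 2 then 0 else d ℓ) * ((2*δ:ℝ):ℂ) ^ ℓ‖)
      atTop (nhds 0) := by
    have := hgs.tendsto_atTop_zero.norm
    simpa using this
  obtain ⟨D0, hD0⟩ := htend.bddAbove_range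
  set D : ℝ := max D0 0 with hDdef
  have hD0' : (0:ℝ) ≤ D := le_max_right _ _
  have hdb : ∀ ℓ : ℕ, 2 ≤ ℓ → ‖d ℓ‖ * (2*δ) ^ ℓ ≤ D := by
    intro ℓ hℓ
    have h1 : ‖(if ℓ < 2 then 0 else d ℓ) * ((2*δ:ℝ):ℂ) ^ ℓ‖ ≤ D0 :=
      hD0 (Set.mem_range_self ℓ)
    rw [if_neg (by omega), norm_mul, norm_pow, Complex.norm_real, Real.norm_eq_abs,
      abs_of_pos (by linarith)] at h1
    exact h1.trans (le_max_left _ _)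
  -- majorant series
  set k : ℕ := ⌈r⌉₊ + 1 with hkdef
  set A : ℕ → ℝ := fun ℓ => (ℓ:ℝ) * (ℓ:ℝ) ^ r * (1/2:ℝ) ^ ℓ with hAdef
  have hAnn : ∀ ℓ, 0 ≤ A ℓ := by
    intro ℓ
    have : (0:ℝ) ≤ (ℓ:ℝ) ^ r := Real.rpow_nonneg (Nat.cast_nonneg ℓ) r
    positivity
  have hAle : ∀ ℓ : ℕ, A ℓ ≤ (ℓ:ℝ) ^ k * (1/2:ℝ) ^ ℓ := by
    intro ℓ
    rcases Nat.eq_zero_or_pos ℓ with h0 | h1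
    · subst h0; simp [hAdef, hkdef, pow_succ]
    · have hl1 : (1:ℝ) ≤ (ℓ:ℝ) := by exact_mod_cast h1
      have h2 : (ℓ:ℝ) ^ r ≤ (ℓ:ℝ) ^ (⌈r⌉₊:ℕ) := by
        rw [← Real.rpow_natCast]
        exact Real.rpow_le_rpow_of_exponent_le hl1 (Nat.le_ceil r)
      have h3 : (ℓ:ℝ) * (ℓ:ℝ) ^ r ≤ (ℓ:ℝ) ^ k := by
        calc (ℓ:ℝ) * (ℓ:ℝ) ^ r ≤ (ℓ:ℝ) * (ℓ:ℝ) ^ (⌈r⌉₊:ℕ) := by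
              apply mul_le_mul_of_nonneg_left h2 (by linarith)
          _ = (ℓ:ℝ) ^ k := by rw [hkdef, pow_succ]; ring
      apply mul_le_mul_of_nonneg_right h3 (by positivity)
  have hmaj : Summable (fun ℓ : ℕ => (ℓ:ℝ) ^ k * (1/2:ℝ) ^ ℓ) := by
    apply summable_pow_mul_geometric_of_norm_lt_one
    rw [Real.norm_eq_abs]
    exact abs_lt.mpr ⟨by norm_num, by norm_num⟩
  have hAsum : Summable A := Summable.of_nonneg_of_le hAnn hAle hmaj
  set S : ℝ := ∑' ℓ, A ℓ with hSdef
  have hS0 : 0 ≤ S := tsum_nonneg hAnn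
  set C : ℝ := D * (4 / c) * S / δ with hCdef
  have hC0 : 0 ≤ C := by positivity
  refine ⟨C + 1, by positivity, ?_⟩
  intro p hp q hq heq
  simp only [Set.mem_setOf_eq] at hp hq
  have heq' : (p.1, p.2 + h p) = (q.1, q.2 + h q) := heq
  rw [Prod.mk.injEq] at heq'
  obtain ⟨h1, h2⟩ := heq'
  have hx1 : 1 < p.1.re := by linarith [hp.1]
  have hxpos : (0:ℝ) < p.1.re := by linarith
  -- key Lipschitz estimate
  set B : ℝ := D * (4 / c) * ‖p.2 - q.2‖ / (δ * p.1.re) with hBdef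
  have hB0 : 0 ≤ B := by positivity
  have hhp : HasSum (fun ℓ : ℕ => l⁻¹ * ((if ℓ < 2 then 0 else d ℓ) * p.2 ^ ℓ * s ℓ p.1))
      (h (p.1, p.2)) := hh p.1 p.2 hx1
  have hhq : HasSum (fun ℓ : ℕ => l⁻¹ * ((if ℓ < 2 then 0 else d ℓ) * q.2 ^ ℓ * s ℓ p.1))
      (h (p.1, q.2)) := hh p.1 q.2 hx1
  have hFsum := hhp.sub hhq
  have hbound : ∀ ℓ : ℕ,
      ‖l⁻¹ * ((if ℓ < 2 then 0 else d ℓ) * p.2 ^ ℓ * s ℓ p.1)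
        - l⁻¹ * ((if ℓ < 2 then 0 else d ℓ) * q.2 ^ ℓ * s ℓ p.1)‖ ≤ B * A ℓ := by
    intro ℓ
    by_cases hℓ : ℓ < 2
    · rw [if_pos hℓ]
      simp only [zero_mul, mul_zero, sub_zero, norm_zero]
      exact mul_nonneg hB0 (hAnn ℓ)
    · push_neg at hℓ
      rw [if_neg (by omega)]
      have hfe : l⁻¹ * (d ℓ * p.2 ^ ℓ * s ℓ p.1) - l⁻¹ * (d ℓ * q.2 ^ ℓ * s ℓ p.1)
          = l⁻¹ * (d ℓ * ((p.2 ^ ℓ - q.2 ^ ℓ) * s ℓ p.1)) := by ring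
      rw [hfe, norm_mul, norm_inv, hlnorm, inv_one, one_mul, norm_mul, norm_mul]
      have hb1 : ‖d ℓ‖ ≤ D / (2*δ) ^ ℓ := by
        rw [le_div_iff₀ (by positivity)]
        exact hdb ℓ hℓ
      have hb2 : ‖p.2 ^ ℓ - q.2 ^ ℓ‖ ≤ ℓ * δ ^ (ℓ - 1) * ‖p.2 - q.2‖ :=
        powDiffBound p.2 q.2 δ hp.2.le hq.2.le ℓ (by omega)
      have hb3 : ‖s ℓ p.1‖ ≤ (4 / c) * (ℓ:ℝ) ^ r / p.1.re := sBound ℓ hℓ p.1 hx1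
      calc ‖d ℓ‖ * (‖p.2 ^ ℓ - q.2 ^ ℓ‖ * ‖s ℓ p.1‖)
          ≤ (D / (2*δ) ^ ℓ) * ((ℓ * δ ^ (ℓ - 1) * ‖p.2 - q.2‖) * ((4 / c) * (ℓ:ℝ) ^ r / p.1.re)) := by
            have hs0 : (0:ℝ) ≤ ‖s ℓ p.1‖ := norm_nonneg _
            have hw0 : (0:ℝ) ≤ ‖p.2 ^ ℓ - q.2 ^ ℓ‖ := norm_nonneg _
            have hrhs2 : (0:ℝ) ≤ (ℓ:ℝ) * δ ^ (ℓ - 1) * ‖p.2 - q.2‖ := by positivity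
            apply mul_le_mul hb1 (mul_le_mul hb2 hb3 hs0 hrhs2)
              (by positivity) (by positivity)
        _ = B * A ℓ := by
            have hℓδ : δ ^ ℓ = δ ^ (ℓ - 1) * δ := by
              rw [← pow_succ]
              congr 1
              omega
            have h2δ : (2*δ:ℝ) ^ ℓ = 2 ^ ℓ * (δ ^ (ℓ - 1) * δ) := by
              rw [mul_pow, hℓδ]
            rw [hBdef, hAdef, h2δ]
            have hδ1 : (0:ℝ) < δ ^ (ℓ - 1) := by positivity
            simp only [one_div, inv_pow]
            field_simp
  have hnormsum : Summable (fun ℓ : ℕ =>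
      ‖l⁻¹ * ((if ℓ < 2 then 0 else d ℓ) * p.2 ^ ℓ * s ℓ p.1)
        - l⁻¹ * ((if ℓ < 2 then 0 else d ℓ) * q.2 ^ ℓ * s ℓ p.1)‖) :=
    Summable.of_nonneg_of_le (fun _ => norm_nonneg _) hbound (hAsum.mul_left B)
  have hkey : ‖h (p.1, p.2) - h (p.1, q.2)‖ ≤ B * S := by
    rw [← hFsum.tsum_eq]
    calc ‖∑' ℓ, (l⁻¹ * ((if ℓ < 2 then 0 else d ℓ) * p.2 ^ ℓ * s ℓ p.1)
          - l⁻¹ * ((if ℓ < 2 then 0 else d ℓ) * q.2 ^ ℓ * s ℓ p.1))‖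
        ≤ ∑' ℓ, ‖l⁻¹ * ((if ℓ < 2 then 0 else d ℓ) * p.2 ^ ℓ * s ℓ p.1)
          - l⁻¹ * ((if ℓ < 2 then 0 else d ℓ) * q.2 ^ ℓ * s ℓ p.1)‖ :=
          norm_tsum_le_tsum_norm hnormsum
      _ ≤ ∑' ℓ, B * A ℓ := Summable.tsum_le_tsum hbound hnormsum (hAsum.mul_left B)
      _ = B * S := by rw [tsum_mul_left]
  -- conclude
  have hqeq : q = (p.1, q.2) := by rw [h1]
  have hpeq : p = (p.1, p.2) := rfl
  have h3 : p.2 - q.2 = h (p.1, q.2) - h (p.1, p.2) := by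
    have := h2
    rw [hqeq] at this
    rw [← hpeq]
    linear_combination this
  have ht : ‖p.2 - q.2‖ ≤ B * S := by
    rw [h3, norm_sub_rev]
    exact hkey
  have hBS : B * S = C * ‖p.2 - q.2‖ / p.1.re := by
    rw [hBdef, hCdef]
    field_simp
  rw [hBS] at ht
  have hzero : ‖p.2 - q.2‖ = 0 := by
    by_contra hne0
    have htpos : 0 < ‖p.2 - q.2‖ := lt_of_le_of_ne (norm_nonneg _) (Ne.symm hne0)
    have hlt : C * ‖p.2 - q.2‖ / p.1.re < ‖p.2 - q.2‖ := by
      rw [div_lt_iff₀ hxpos]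
      have : C < p.1.re := by linarith [hp.1]
      nlinarith
    linarith
  have h4 : p.2 = q.2 := by
    rwa [norm_sub_eq_zero_iff] at hzero
  exact Prod.ext h1 h4
end

section
/- Let λ = e^{2πiθ} with θ Diophantine and let f(w) = 1 + ∑_{ℓ≥1} d_ℓ w^ℓ be entire. Then for every δ > 0 there exists a constant M(δ) > 0 such that for all integers n ≥ 1 and all w with |w| ≤ δ, the ergodic-type sum satisfies |∑_{k=0}^{n−1} (f(λ^k w) − 1)| ≤ M(δ), i.e. the sums ∑_{k=0}^{n−1}(f(λ^k w) − 1) are bounded uniformly in n and in |w| ≤ δ. -/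
/-- Uniform boundedness of the ergodic sums
`∑_{k=0}^{n−1} (f(λ^k w) − 1)` for `|w| ≤ δ`, for `f` entire with `f(0)=1` and
`λ = e^{2πiθ}`, `θ` Diophantine. -/
theorem stmt9 (θ : ℝ) (l : ℂ) (hl : l = Complex.exp (2 * Real.pi * Complex.I * θ))
    (hdio : ∃ c r : ℝ, 0 < c ∧ 0 < r ∧ ∀ n : ℕ, 1 ≤ n →
      c * (n : ℝ) ^ (-r) ≤ ‖l ^ n - 1‖)
    (d : ℕ → ℂ) (f : ℂ → ℂ)
    (hf : ∀ w : ℂ, HasSum (fun ℓ : ℕ => (if ℓ = 0 then 0 else d ℓ) * w ^ ℓ) (f w - 1))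
    (δ : ℝ) (hδ : 0 < δ) :
    ∃ M : ℝ, 0 < M ∧ ∀ (n : ℕ) (w : ℂ), ‖w‖ ≤ δ →
      ‖∑ k ∈ Finset.range n, (f (l ^ k * w) - 1)‖ ≤ M := by
  obtain ⟨c, r, hc, hr, hD⟩ := hdio
  set a : ℕ → ℂ := fun ℓ => if ℓ = 0 then 0 else d ℓ with ha
  -- |l| = 1
  have hl1 : ‖l‖ = 1 := by
    rw [hl]
    have h2 : (2 * (Real.pi : ℂ) * Complex.I * θ) = ((2 * Real.pi * θ : ℝ) : ℂ) * Complex.I := by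
      push_cast; ring
    rw [h2, Complex.norm_exp_ofReal_mul_I]
  -- geometric sum bound
  have hgeom : ∀ ℓ : ℕ, 1 ≤ ℓ → ∀ n : ℕ,
      ‖∑ k ∈ Finset.range n, (l ^ ℓ) ^ k‖ ≤ 2 / c * (ℓ : ℝ) ^ r := by
    intro ℓ hℓ n
    have hℓ1 : (1 : ℝ) ≤ (ℓ : ℝ) := by exact_mod_cast hℓ
    have hpos : (0 : ℝ) < c * (ℓ : ℝ) ^ (-r) := by positivity
    have hlow : c * (ℓ : ℝ) ^ (-r) ≤ ‖l ^ ℓ - 1‖ := hD ℓ hℓ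
    have hz1 : l ^ ℓ ≠ 1 := by
      intro h
      rw [h] at hlow; simp only [sub_self, norm_zero] at hlow; linarith
    rw [geom_sum_eq hz1, norm_div]
    have hnum : ‖(l ^ ℓ) ^ n - 1‖ ≤ 2 := by
      calc ‖(l ^ ℓ) ^ n - 1‖ ≤ ‖(l ^ ℓ) ^ n‖ + ‖(1 : ℂ)‖ := norm_sub_le _ _
        _ = 2 := by rw [norm_pow, norm_pow, hl1]; norm_num
    have h1 : ‖(l ^ ℓ) ^ n - 1‖ / ‖l ^ ℓ - 1‖ ≤ 2 / (c * (ℓ : ℝ) ^ (-r)) :=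
      div_le_div₀ (by norm_num) hnum hpos hlow
    have h2 : 2 / (c * (ℓ : ℝ) ^ (-r)) = 2 / c * (ℓ : ℝ) ^ r := by
      rw [Real.rpow_neg (by positivity)]
      field_simp
    linarith [h1, h2 ▸ h1]
  -- boundedness of coefficients against radius 2δ
  have hsum2 : Summable (fun ℓ : ℕ => a ℓ * ((2 * δ : ℝ) : ℂ) ^ ℓ) := (hf _).summable
  have htend : Filter.Tendsto (fun ℓ : ℕ => ‖a ℓ * ((2 * δ : ℝ) : ℂ) ^ ℓ‖)
      Filter.atTop (nhds 0) := by
    simpa using hsum2.tendsto_atTop_zero.norm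
  obtain ⟨C0, hC0⟩ := htend.bddAbove_range
  set C : ℝ := max C0 1 with hCdef
  have hC1 : (1 : ℝ) ≤ C := le_max_right _ _
  have hCpos : (0 : ℝ) < C := lt_of_lt_of_le one_pos hC1
  have hCb : ∀ ℓ : ℕ, ‖a ℓ‖ * (2 * δ) ^ ℓ ≤ C := by
    intro ℓ
    have h1 : ‖a ℓ * ((2 * δ : ℝ) : ℂ) ^ ℓ‖ ≤ C0 :=
      hC0 (Set.mem_range_self ℓ)
    have h2 : ‖a ℓ * ((2 * δ : ℝ) : ℂ) ^ ℓ‖ = ‖a ℓ‖ * (2 * δ) ^ ℓ := by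
      rw [norm_mul, norm_pow, Complex.norm_real, Real.norm_eq_abs,
        abs_of_pos (by linarith)]
    rw [h2] at h1
    exact h1.trans (le_max_left _ _)
  -- coefficient bound at radius δ
  have hcoef : ∀ ℓ : ℕ, ‖a ℓ‖ * δ ^ ℓ ≤ C * (1 / 2 : ℝ) ^ ℓ := by
    intro ℓ
    have h1 : ‖a ℓ‖ * δ ^ ℓ = (‖a ℓ‖ * (2 * δ) ^ ℓ) * (1 / 2 : ℝ) ^ ℓ := by
      rw [mul_assoc, ← mul_pow]
      have : 2 * δ * (1 / 2 : ℝ) = δ := by ring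
      rw [this]
    rw [h1]
    exact mul_le_mul_of_nonneg_right (hCb ℓ) (by positivity)
  -- the dominating summable series
  set m : ℕ := ⌈r⌉₊ with hm
  set g : ℕ → ℝ := fun ℓ => 2 / c * (ℓ : ℝ) ^ r * (‖a ℓ‖ * δ ^ ℓ) with hg
  have hgnonneg : ∀ ℓ, 0 ≤ g ℓ := by
    intro ℓ; simp only [hg]; positivity
  have hrpow_le : ∀ ℓ : ℕ, 1 ≤ ℓ → ((ℓ : ℝ)) ^ r ≤ ((ℓ : ℝ)) ^ m := by
    intro ℓ hℓ
    have hℓ1 : (1 : ℝ) ≤ (ℓ : ℝ) := by exact_mod_cast hℓ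
    calc ((ℓ : ℝ)) ^ r ≤ ((ℓ : ℝ)) ^ (m : ℝ) :=
          Real.rpow_le_rpow_of_exponent_le hℓ1 (Nat.le_ceil r)
      _ = ((ℓ : ℝ)) ^ m := Real.rpow_natCast _ _
  have hgle : ∀ ℓ : ℕ, g ℓ ≤ (2 * C / c) * ((ℓ : ℝ) ^ m * (1 / 2 : ℝ) ^ ℓ) := by
    intro ℓ
    rcases Nat.eq_zero_or_pos ℓ with h0 | h1
    · subst h0
      have hz : g 0 = 0 := by simp [hg, ha]
      rw [hz]
      positivity
    · have h2 : g ℓ ≤ 2 / c * (ℓ : ℝ) ^ m * (C * (1 / 2 : ℝ) ^ ℓ) := by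
        apply mul_le_mul
        · exact mul_le_mul_of_nonneg_left (hrpow_le ℓ h1) (by positivity)
        · exact hcoef ℓ
        · positivity
        · positivity
      calc g ℓ ≤ 2 / c * (ℓ : ℝ) ^ m * (C * (1 / 2 : ℝ) ^ ℓ) := h2
        _ = (2 * C / c) * ((ℓ : ℝ) ^ m * (1 / 2 : ℝ) ^ ℓ) := by ring
  have hdom : Summable (fun ℓ : ℕ => (2 * C / c) * ((ℓ : ℝ) ^ m * (1 / 2 : ℝ) ^ ℓ)) :=
    (summable_pow_mul_geometric_of_norm_lt_one m
      (by rw [Real.norm_eq_abs, abs_of_pos]; all_goals norm_num : ‖(1 / 2 : ℝ)‖ < 1)).mul_left _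
  have hg_sum : Summable g := hdom.of_nonneg_of_le hgnonneg hgle
  have htn : 0 ≤ ∑' ℓ, g ℓ := tsum_nonneg hgnonneg
  refine ⟨(∑' ℓ, g ℓ) + 1, by linarith, ?_⟩
  intro n w hw
  -- interchange of sums
  have H : HasSum (fun ℓ : ℕ => ∑ k ∈ Finset.range n, a ℓ * (l ^ k * w) ^ ℓ)
      (∑ k ∈ Finset.range n, (f (l ^ k * w) - 1)) :=
    hasSum_sum (fun k _ => hf (l ^ k * w))
  set F : ℕ → ℂ := fun ℓ => ∑ k ∈ Finset.range n, a ℓ * (l ^ k * w) ^ ℓ with hF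
  have hFle : ∀ ℓ : ℕ, ‖F ℓ‖ ≤ g ℓ := by
    intro ℓ
    rcases Nat.eq_zero_or_pos ℓ with h0 | h1
    · subst h0
      have : F 0 = 0 := by simp [hF, ha]
      rw [this, norm_zero]
      exact hgnonneg 0
    · have hrw : F ℓ = a ℓ * w ^ ℓ * ∑ k ∈ Finset.range n, (l ^ ℓ) ^ k := by
        rw [hF, Finset.mul_sum]
        apply Finset.sum_congr rfl
        intro k _
        rw [mul_pow, ← pow_mul, ← pow_mul, Nat.mul_comm k ℓ]
        ring
      rw [hrw, norm_mul, norm_mul, norm_pow]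
      have hb1 : ‖w‖ ^ ℓ ≤ δ ^ ℓ := pow_le_pow_left₀ (norm_nonneg _) hw ℓ
      have hb2 : ‖∑ k ∈ Finset.range n, (l ^ ℓ) ^ k‖ ≤ 2 / c * (ℓ : ℝ) ^ r :=
        hgeom ℓ h1 n
      calc ‖a ℓ‖ * ‖w‖ ^ ℓ * ‖∑ k ∈ Finset.range n, (l ^ ℓ) ^ k‖
          ≤ ‖a ℓ‖ * δ ^ ℓ * (2 / c * (ℓ : ℝ) ^ r) := by
            apply mul_le_mul
            · exact mul_le_mul_of_nonneg_left hb1 (norm_nonneg _)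
            · exact hb2
            · exact norm_nonneg _
            · positivity
        _ = g ℓ := by rw [hg]; ring
  have hFnorm : Summable (fun ℓ : ℕ => ‖F ℓ‖) :=
    hg_sum.of_nonneg_of_le (fun ℓ => norm_nonneg _) hFle
  have heq : ∑ k ∈ Finset.range n, (f (l ^ k * w) - 1) = ∑' ℓ, F ℓ := H.tsum_eq.symm
  rw [heq]
  calc ‖∑' ℓ, F ℓ‖ ≤ ∑' ℓ, ‖F ℓ‖ := norm_tsum_le_tsum_norm hFnorm
    _ ≤ ∑' ℓ, g ℓ := Summable.tsum_le_tsum hFle hFnorm hg_sum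
    _ ≤ (∑' ℓ, g ℓ) + 1 := by linarith
end

section
/- Let F be an automorphism of ℂ² of the form F(z,w) = (z + f(w)z² + O(z³), λw + g(w)z + O(z²)) with f(0) = 1 and λ = e^{2πiθ}, θ Diophantine. Then F fixes the line {0} × ℂ pointwise up to rotation, F^n(0,w) = (0, λ^n w), and the second z-derivative of the first coordinate of F^n along this line satisfies ∂²π₁(F^n)/∂z²(0,w) = 2∑_{k=0}^{n−1} f(λ^k w), which tends to ∞ in absolute value as n → ∞. Consequently no point (0,w) belongs to the Fatou set of F. -/
open Filter Metric


private lemma derivDiff {f : ℂ → ℂ} (hf : Differentiable ℂ f) : Differentiable ℂ (deriv f) := by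
  exact (contDiff_infty_iff_deriv.mp (hf.contDiff (n := (⊤:ℕ∞)))).2.differentiable (by simp)

private lemma sq_mul_deriv {q h : ℂ → ℂ} (hq : Differentiable ℂ q) (hh : Differentiable ℂ h)
    (h0 : q 0 = 0) :
    deriv (fun z => q z ^ 2 * h z) 0 = 0 ∧
    deriv (deriv (fun z => q z ^ 2 * h z)) 0 = 2 * (deriv q 0) ^ 2 * h 0 := by
  have hq' := derivDiff hq
  have hh' := derivDiff hh
  have e1 : deriv (fun z => q z ^ 2 * h z)
      = fun z => (2 * q z * deriv q z) * h z + q z ^ 2 * deriv h z := by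
    funext z
    rw [deriv_fun_mul (show DifferentiableAt ℂ (fun z => q z ^ 2) z from (hq z).pow 2) (hh z), deriv_fun_pow (hq z) 2]
    ring
  constructor
  · rw [e1]; simp [h0]
  · rw [e1]
    have dA : DifferentiableAt ℂ (fun z => 2 * q z * deriv q z * h z) 0 :=
      ((((differentiable_const (2:ℂ)).mul hq).mul hq').mul hh) 0
    have dB : DifferentiableAt ℂ (fun z => q z ^ 2 * deriv h z) 0 :=
      ((hq.pow 2).mul hh') 0
    rw [deriv_fun_add dA dB,
      deriv_fun_mul (show DifferentiableAt ℂ (fun z => 2 * q z * deriv q z) 0 from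
        ((differentiable_const (2:ℂ)).mul hq).mul hq' 0) (hh 0),
      deriv_fun_mul (show DifferentiableAt ℂ (fun z => 2 * q z) 0 from
        (differentiable_const (2:ℂ)).mul hq 0) (hq' 0),
      deriv_fun_mul (show DifferentiableAt ℂ (fun z => q z ^ 2) 0 from (hq.pow 2) 0) (hh' 0),
      deriv_const_mul 2 (hq 0), deriv_fun_pow (hq 0) 2]
    simp [h0]
    ring_nf
    exact Or.inl trivial

private lemma deriv2_add {a b : ℂ → ℂ} (ha : Differentiable ℂ a) (hb : Differentiable ℂ b) :
    deriv (fun z => a z + b z) 0 = deriv a 0 + deriv b 0 ∧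
    deriv (deriv (fun z => a z + b z)) 0 = deriv (deriv a) 0 + deriv (deriv b) 0 := by
  have e : deriv (fun z => a z + b z) = fun z => deriv a z + deriv b z :=
    funext fun z => deriv_add (ha z) (hb z)
  exact ⟨by rw [e], by rw [e, deriv_fun_add ((derivDiff ha) 0) ((derivDiff hb) 0)]⟩


private lemma stmt10_step {u u' H : ℂ → ℂ} (hu : Differentiable ℂ u) (hH : Differentiable ℂ H)
    (hu0 : u 0 = 0) (hrec : u' = fun z => u z + u z ^ 2 * H z) :
    deriv u' 0 = deriv u 0 ∧
    deriv (deriv u') 0 = deriv (deriv u) 0 + 2 * (deriv u 0) ^ 2 * H 0 := by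
  subst hrec
  have hb : Differentiable ℂ (fun z => u z ^ 2 * H z) := (hu.pow 2).mul hH
  have hA := deriv2_add hu hb
  have hQ := sq_mul_deriv hu hH hu0
  exact ⟨by rw [hA.1, hQ.1]; ring, by rw [hA.2, hQ.2]⟩


private lemma stmt10_blowup (l : ℂ) (hl1 : ∀ k : ℕ, ‖l ^ k‖ = 1)
    (c r : ℝ) (hc : 0 < c) (hD : ∀ n : ℕ, 1 ≤ n → c * (n : ℝ) ^ (-r) ≤ ‖l ^ n - 1‖)
    (f : ℂ → ℂ) (hfd : Differentiable ℂ f) (hf0 : f 0 = 1) (w : ℂ) :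
    Tendsto (fun n : ℕ => ‖2 * ∑ k ∈ Finset.range n, f (l ^ k * w)‖) atTop atTop := by
  set R : NNReal := ‖w‖₊ + 1 with hR
  have hRpos : (0 : NNReal) < R := by positivity
  obtain ⟨p, hps⟩ : ∃ p : FormalMultilinearSeries ℂ ℂ ℂ, HasFPowerSeriesOnBall f p 0 R :=
    ⟨_, (hfd.differentiableOn).hasFPowerSeriesOnBall hRpos⟩
  set a : ℕ → ℂ := fun j => p.coeff j with ha
  have hnw : ∀ k : ℕ, ‖l ^ k * w‖ = ‖w‖ := fun k => by rw [norm_mul, hl1, one_mul]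
  have hmem : ∀ k : ℕ, (l ^ k * w) ∈ Metric.eball (0 : ℂ) R := by
    intro k
    rw [Metric.mem_eball, edist_zero_right, enorm_eq_nnnorm]
    have h2 : ‖l ^ k * w‖₊ = ‖w‖₊ := NNReal.coe_injective (by simpa using hnw k)
    rw [h2]
    exact_mod_cast (lt_add_one _ : ‖w‖₊ < ‖w‖₊ + 1)
  -- Hasum of the series at l^k w
  have hsum : ∀ k : ℕ, HasSum (fun j => a j * (l ^ k * w) ^ j) (f (l ^ k * w)) := by
    intro k
    have := hps.hasSum (hmem k)
    rw [zero_add] at this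
    convert this using 2 with j
    · rfl
    rw [FormalMultilinearSeries.apply_eq_pow_smul_coeff]
    simp [ha, mul_comm]
  have ha0 : a 0 = 1 := by
    have h1 := hps.hasFPowerSeriesAt.coeff_zero (fun _ => 1)
    have h2 : p 0 (fun _ => (1:ℂ)) = p.coeff 0 := by
      rw [FormalMultilinearSeries.apply_eq_pow_smul_coeff]; simp
    show p.coeff 0 = 1
    rw [← h2, h1, hf0]
  -- shifted sum
  have hsum1 : ∀ k : ℕ, HasSum (fun j => a (j + 1) * (l ^ k * w) ^ (j + 1))
      (f (l ^ k * w) - 1) := by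
    intro k
    have := (hasSum_nat_add_iff' (f := fun j => a j * (l ^ k * w) ^ j) 1).mpr (hsum k)
    simpa [ha0] using this
  -- geometric sum bound
  have hgeom : ∀ (j n : ℕ), ‖∑ k ∈ Finset.range n, (l ^ (j+1)) ^ k‖ ≤ 2 * ((j:ℝ)+1) ^ r / c := by
    intro j n
    have hDb := hD (j+1) (by omega)
    have hpow : (0:ℝ) < ((j:ℝ)+1) ^ r := Real.rpow_pos_of_pos (by positivity) r
    have hcast : ((j+1 : ℕ) : ℝ) ^ (-r) = (((j:ℝ)+1) ^ r)⁻¹ := by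
      rw [Real.rpow_neg (by positivity)]
      norm_num
    have hden : c / ((j:ℝ)+1) ^ r ≤ ‖l ^ (j+1) - 1‖ := by
      rw [div_eq_mul_inv, ← hcast]
      exact hDb
    have hdenpos : (0:ℝ) < ‖l ^ (j+1) - 1‖ := lt_of_lt_of_le (by positivity) hden
    have hx1 : l ^ (j+1) ≠ 1 := by
      intro h
      rw [h] at hdenpos
      simp at hdenpos
    rw [geom_sum_eq hx1, norm_div]
    have hnum : ‖(l ^ (j+1)) ^ n - 1‖ ≤ 2 := by
      calc ‖(l ^ (j+1)) ^ n - 1‖ ≤ ‖(l ^ (j+1)) ^ n‖ + ‖(1:ℂ)‖ := norm_sub_le _ _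
        _ = 2 := by rw [← pow_mul, hl1]; norm_num
    calc ‖(l ^ (j+1)) ^ n - 1‖ / ‖l ^ (j+1) - 1‖ ≤ 2 / (c / ((j:ℝ)+1) ^ r) :=
          div_le_div₀ (by norm_num) hnum (by positivity) hden
      _ = 2 * ((j:ℝ)+1) ^ r / c := by
          field_simp
  -- summable majorant
  have hrad : (‖w‖₊ : ENNReal) < p.radius := by
    refine lt_of_lt_of_le ?_ hps.r_le
    exact_mod_cast (lt_add_one (‖w‖₊ : NNReal))
  obtain ⟨α, hα, C, hC, hbound⟩ := p.norm_mul_pow_le_mul_pow_of_lt_radius hrad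
  have hcoeff : ∀ j, ‖a j‖ ≤ ‖p j‖ := by
    intro j
    have h1 : p j (fun _ => (1:ℂ)) = a j := by
      rw [FormalMultilinearSeries.apply_eq_pow_smul_coeff]; simp [ha]
    calc ‖a j‖ = ‖p j (fun _ => (1:ℂ))‖ := by rw [h1]
      _ ≤ ‖p j‖ * ∏ _i : Fin j, ‖(1:ℂ)‖ := (p j).le_opNorm _
      _ = ‖p j‖ := by simp
  set m := ⌈r⌉₊ with hm
  set B : ℕ → ℝ := fun j => ‖a (j+1)‖ * ‖w‖ ^ (j+1) * (2 * ((j:ℝ)+1) ^ r / c) with hB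
  have hBnn : ∀ j, 0 ≤ B j := by
    intro j
    have := Real.rpow_pos_of_pos (show (0:ℝ) < (j:ℝ)+1 by positivity) r
    positivity
  have hBle : ∀ j, B j ≤ (2*C/c) * (((j+1:ℕ):ℝ) ^ m * α ^ (j+1)) := by
    intro j
    have h1 : ‖a (j+1)‖ * ‖w‖ ^ (j+1) ≤ C * α ^ (j+1) := by
      have := hbound (j+1)
      rw [coe_nnnorm] at this
      calc ‖a (j+1)‖ * ‖w‖ ^ (j+1) ≤ ‖p (j+1)‖ * ‖w‖ ^ (j+1) :=
            mul_le_mul_of_nonneg_right (hcoeff _) (by positivity)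
        _ ≤ C * α ^ (j+1) := this
    have h2 : ((j:ℝ)+1) ^ r ≤ ((j+1:ℕ):ℝ) ^ m := by
      rw [← Real.rpow_natCast]
      push_cast
      exact Real.rpow_le_rpow_of_exponent_le (by linarith [Nat.cast_nonneg (α := ℝ) j])
        (le_trans (Nat.le_ceil r) (by exact_mod_cast le_refl _))
    have hα1 : (0:ℝ) < α := hα.1
    have hpow : (0:ℝ) < ((j:ℝ)+1) ^ r := Real.rpow_pos_of_pos (by positivity) r
    have h3 : (0:ℝ) ≤ C * α ^ (j+1) := by positivity
    calc B j = (‖a (j+1)‖ * ‖w‖ ^ (j+1)) * (2 * ((j:ℝ)+1) ^ r / c) := rfl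
      _ ≤ (C * α ^ (j+1)) * (2 * ((j+1:ℕ):ℝ) ^ m / c) := by
          apply mul_le_mul h1 ?_ (by positivity) h3
          gcongr
      _ = (2*C/c) * (((j+1:ℕ):ℝ) ^ m * α ^ (j+1)) := by ring
  have hBsum : Summable B := by
    have hs : Summable (fun j : ℕ => ((j:ℝ)) ^ m * α ^ j) :=
      summable_pow_mul_geometric_of_norm_lt_one m
        (by rw [Real.norm_eq_abs, abs_of_pos hα.1]; exact hα.2)
    have hs1 : Summable (fun j : ℕ => (((j+1:ℕ)):ℝ) ^ m * α ^ (j+1)) :=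
      (summable_nat_add_iff (f := fun j : ℕ => ((j:ℝ)) ^ m * α ^ j) 1).mpr hs
    exact Summable.of_nonneg_of_le hBnn hBle (hs1.mul_left _)
  set M := ∑' j, B j with hM
  have key : ∀ n : ℕ, ‖(∑ k ∈ Finset.range n, f (l ^ k * w)) - n‖ ≤ M := by
    intro n
    have e2 : ∀ k : ℕ, f (l ^ k * w) - 1 = ∑' j, a (j+1) * (l ^ k * w) ^ (j+1) :=
      fun k => ((hsum1 k).tsum_eq).symm
    have hTn : (∑ k ∈ Finset.range n, f (l ^ k * w)) - n
        = ∑' j, ∑ k ∈ Finset.range n, a (j+1) * (l ^ k * w) ^ (j+1) := by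
      have e1 : (∑ k ∈ Finset.range n, f (l ^ k * w)) - n
          = ∑ k ∈ Finset.range n, (f (l ^ k * w) - 1) := by
        rw [Finset.sum_sub_distrib]
        simp
      rw [e1, Finset.sum_congr rfl (fun k _ => e2 k),
        ← Summable.tsum_finsetSum (fun k _ => (hsum1 k).summable)]
    rw [hTn]
    apply tsum_of_norm_bounded hBsum.hasSum
    intro j
    have e3 : ∑ k ∈ Finset.range n, a (j+1) * (l ^ k * w) ^ (j+1)
        = a (j+1) * w ^ (j+1) * ∑ k ∈ Finset.range n, (l ^ (j+1)) ^ k := by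
      rw [Finset.mul_sum]
      apply Finset.sum_congr rfl
      intro k _
      ring
    rw [e3, norm_mul, norm_mul, norm_pow]
    calc ‖a (j+1)‖ * ‖w‖ ^ (j+1) * ‖∑ k ∈ Finset.range n, (l ^ (j+1)) ^ k‖
        ≤ ‖a (j+1)‖ * ‖w‖ ^ (j+1) * (2 * ((j:ℝ)+1) ^ r / c) :=
          mul_le_mul_of_nonneg_left (hgeom j n) (by positivity)
      _ = B j := rfl
  have hlow : ∀ n : ℕ, 2 * ((n:ℝ) - M) ≤ ‖2 * ∑ k ∈ Finset.range n, f (l ^ k * w)‖ := by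
    intro n
    rw [norm_mul]
    have h2 : ‖(2:ℂ)‖ = 2 := by norm_num
    have hb := key n
    have h3 : ‖((n:ℕ):ℂ)‖ - ‖(∑ k ∈ Finset.range n, f (l ^ k * w)) - (n:ℂ)‖
        ≤ ‖∑ k ∈ Finset.range n, f (l ^ k * w)‖ := by
      have h4 := norm_sub_norm_le ((n:ℂ)) ((n:ℂ) - ∑ k ∈ Finset.range n, f (l ^ k * w))
      have h5 : (n:ℂ) - ((n:ℂ) - ∑ k ∈ Finset.range n, f (l ^ k * w))
          = ∑ k ∈ Finset.range n, f (l ^ k * w) := by ring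
      rw [h5] at h4
      have h6 : ‖(n:ℂ) - ∑ k ∈ Finset.range n, f (l ^ k * w)‖
          = ‖(∑ k ∈ Finset.range n, f (l ^ k * w)) - (n:ℂ)‖ := norm_sub_rev _ _
      linarith
    have h7 : ‖((n:ℕ):ℂ)‖ = (n:ℝ) := by
      simp
    rw [h2]
    have h8 : (n:ℝ) - M ≤ ‖∑ k ∈ Finset.range n, f (l ^ k * w)‖ := by
      rw [h7] at h3
      linarith
    linarith
  apply tendsto_atTop_mono hlow
  have t1 : Tendsto (fun n : ℕ => (n:ℝ) - M) atTop atTop := by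
    apply tendsto_atTop_add_const_right atTop (-M) tendsto_natCast_atTop_atTop |>.congr
    intro n
    ring
  exact t1.const_mul_atTop (by norm_num : (0:ℝ) < 2)


/-- For an automorphism
`F(z,w) = (z + f(w)z² + O(z³), λw + g(w)z + O(z²))` with `f(0)=1`, `g(w)=O(w²)`
and `λ = e^{2πiθ}`, `θ` Diophantine: `F^n(0,w) = (0,λ^n w)`, the second
`z`-derivative of the first coordinate of `F^n` at `(0,w)` equals
`2∑_{k<n} f(λ^k w)` and blows up; consequently no point `(0,w)` lies in the
Fatou set of `F` (normality allowing compact divergence). -/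
theorem stmt10 (θ : ℝ) (l : ℂ) (hl : l = Complex.exp (2 * Real.pi * Complex.I * θ))
    (hdio : ∃ c r : ℝ, 0 < c ∧ 0 < r ∧ ∀ n : ℕ, 1 ≤ n →
      c * (n : ℝ) ^ (-r) ≤ ‖l ^ n - 1‖)
    (F : ℂ × ℂ → ℂ × ℂ) (hFbij : Function.Bijective F) (hFdiff : Differentiable ℂ F)
    (f g : ℂ → ℂ) (hfd : Differentiable ℂ f) (hgd : Differentiable ℂ g)
    (hf0 : f 0 = 1)
    (g₁ : ℂ → ℂ) (hg₁ : Differentiable ℂ g₁) (hgO : ∀ w : ℂ, g w = w ^ 2 * g₁ w)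
    (e₁ e₂ : ℂ × ℂ → ℂ) (he₁ : Differentiable ℂ e₁) (he₂ : Differentiable ℂ e₂)
    (hF : ∀ z w : ℂ,
      F (z, w) = (z + f w * z ^ 2 + z ^ 3 * e₁ (z, w),
                  l * w + g w * z + z ^ 2 * e₂ (z, w))) :
    (∀ (n : ℕ) (w : ℂ), F^[n] (0, w) = (0, l ^ n * w)) ∧
    (∀ (n : ℕ) (w : ℂ), iteratedDeriv 2 (fun z : ℂ => (F^[n] (z, w)).1) 0
        = 2 * ∑ k ∈ Finset.range n, f (l ^ k * w)) ∧
    (∀ w : ℂ, Tendsto (fun n : ℕ => ‖iteratedDeriv 2 (fun z : ℂ => (F^[n] (z, w)).1) 0‖)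
        atTop atTop) ∧
    (∀ w : ℂ, ¬ ∃ U : Set (ℂ × ℂ), IsOpen U ∧ (0, w) ∈ U ∧
      ∀ φ : ℕ → ℕ, StrictMono φ → ∃ ψ : ℕ → ℕ, StrictMono ψ ∧
        ((∃ G : ℂ × ℂ → ℂ × ℂ,
            TendstoLocallyUniformlyOn (fun j : ℕ => F^[φ (ψ j)]) G atTop U) ∨
         (∀ K L : Set (ℂ × ℂ), K ⊆ U → IsCompact K → IsCompact L →
            ∀ᶠ j in atTop, ∀ p ∈ K, F^[φ (ψ j)] p ∉ L))) := by
  obtain ⟨c, r, hc, hr, hD⟩ := hdio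
  have hl1 : ∀ k : ℕ, ‖l ^ k‖ = 1 := by
    have h1 : ‖l‖ = 1 := by
      rw [hl, Complex.norm_exp]
      have : (2 * ↑Real.pi * Complex.I * ↑θ).re = 0 := by
        simp [Complex.mul_re, Complex.mul_im]
      rw [this, Real.exp_zero]
    intro k
    rw [norm_pow, h1, one_pow]
  -- Part 1
  have part1 : ∀ (n : ℕ) (w : ℂ), F^[n] (0, w) = (0, l ^ n * w) := by
    intro n w
    induction n with
    | zero => simp
    | succ n ih =>
      rw [Function.iterate_succ_apply', ih, hF]
      have h1 : (0:ℂ) + f (l ^ n * w) * 0 ^ 2 + 0 ^ 3 * e₁ (0, l ^ n * w) = 0 := by ring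
      have h2 : l * (l ^ n * w) + g (l ^ n * w) * 0 + 0 ^ 2 * e₂ (0, l ^ n * w)
          = l ^ (n + 1) * w := by rw [pow_succ]; ring
      rw [h1, h2]
  -- differentiability of slices
  have hud : ∀ (n : ℕ) (w : ℂ), Differentiable ℂ (fun z : ℂ => (F^[n] (z, w)).1) :=
    fun n w => ((hFdiff.iterate n).comp (differentiable_id.prodMk (differentiable_const w))).fst
  have hvd : ∀ (n : ℕ) (w : ℂ), Differentiable ℂ (fun z : ℂ => (F^[n] (z, w)).2) :=
    fun n w => ((hFdiff.iterate n).comp (differentiable_id.prodMk (differentiable_const w))).snd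
  have hu0 : ∀ (n : ℕ) (w : ℂ), (F^[n] ((0:ℂ), w)).1 = 0 := fun n w => by rw [part1 n w]
  have hv0 : ∀ (n : ℕ) (w : ℂ), (F^[n] ((0:ℂ), w)).2 = l ^ n * w := fun n w => by
    rw [part1 n w]
  -- Part 2 (with deriv ∘ deriv form)
  have claim : ∀ (n : ℕ) (w : ℂ), deriv (fun z : ℂ => (F^[n] (z, w)).1) 0 = 1 ∧
      deriv (deriv (fun z : ℂ => (F^[n] (z, w)).1)) 0
        = 2 * ∑ k ∈ Finset.range n, f (l ^ k * w) := by
    intro n w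
    induction n with
    | zero =>
      have e : (fun z : ℂ => (F^[0] (z, w)).1) = fun z : ℂ => z := by
        funext z; simp
      rw [e]
      constructor
      · simp
      · simp
    | succ n ih =>
      have hHd : Differentiable ℂ (fun z : ℂ => f ((F^[n] (z, w)).2)
          + (F^[n] (z, w)).1 * e₁ ((F^[n] (z, w)).1, (F^[n] (z, w)).2)) :=
        (hfd.comp (hvd n w)).add ((hud n w).mul
          (he₁.comp ((hud n w).prodMk (hvd n w))))
      have hrec : (fun z : ℂ => (F^[n+1] (z, w)).1)
          = fun z : ℂ => (fun z : ℂ => (F^[n] (z, w)).1) z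
              + ((fun z : ℂ => (F^[n] (z, w)).1) z) ^ 2 *
              ((fun z : ℂ => f ((F^[n] (z, w)).2)
                + (F^[n] (z, w)).1 * e₁ ((F^[n] (z, w)).1, (F^[n] (z, w)).2)) z) := by
        funext z
        rw [Function.iterate_succ_apply', ← Prod.mk.eta (p := F^[n] (z, w)), hF]
        show (F^[n] (z, w)).1 + f ((F^[n] (z, w)).2) * (F^[n] (z, w)).1 ^ 2
            + (F^[n] (z, w)).1 ^ 3 * e₁ ((F^[n] (z, w)).1, (F^[n] (z, w)).2) = _
        ring
      have hstep := stmt10_step (u := fun z : ℂ => (F^[n] (z, w)).1)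
        (u' := fun z : ℂ => (F^[n+1] (z, w)).1)
        (H := fun z : ℂ => f ((F^[n] (z, w)).2)
          + (F^[n] (z, w)).1 * e₁ ((F^[n] (z, w)).1, (F^[n] (z, w)).2))
        (hud n w) hHd (hu0 n w) hrec
      constructor
      · rw [hstep.1, ih.1]
      · rw [hstep.2, ih.1, ih.2]
        show _ = 2 * ∑ k ∈ Finset.range (n+1), f (l ^ k * w)
        have hH0 : f ((F^[n] ((0:ℂ), w)).2)
            + (F^[n] ((0:ℂ), w)).1 * e₁ ((F^[n] ((0:ℂ), w)).1, (F^[n] ((0:ℂ), w)).2)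
            = f (l ^ n * w) := by
          rw [hu0 n w, hv0 n w]; ring
        simp only [hH0]
        rw [Finset.sum_range_succ]
        ring
  have h21 : ∀ (n : ℕ) (w : ℂ), iteratedDeriv 2 (fun z : ℂ => (F^[n] (z, w)).1) 0
      = deriv (deriv (fun z : ℂ => (F^[n] (z, w)).1)) 0 := by
    intro n w
    rw [show (2:ℕ) = 1 + 1 from rfl, iteratedDeriv_succ, iteratedDeriv_one]
  have part2 : ∀ (n : ℕ) (w : ℂ), iteratedDeriv 2 (fun z : ℂ => (F^[n] (z, w)).1) 0
      = 2 * ∑ k ∈ Finset.range n, f (l ^ k * w) := by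
    intro n w
    rw [h21, (claim n w).2]
  -- Part 3
  have part3 : ∀ w : ℂ, Tendsto
      (fun n : ℕ => ‖iteratedDeriv 2 (fun z : ℂ => (F^[n] (z, w)).1) 0‖) atTop atTop := by
    intro w
    have hb := stmt10_blowup l hl1 c r hc hD f hfd hf0 w
    have he : (fun n : ℕ => ‖iteratedDeriv 2 (fun z : ℂ => (F^[n] (z, w)).1) 0‖)
        = fun n : ℕ => ‖2 * ∑ k ∈ Finset.range n, f (l ^ k * w)‖ := by
      funext n; rw [part2 n w]
    rw [he]
    exact hb
  refine ⟨part1, part2, part3, ?_⟩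
  -- Part 4
  rintro w ⟨U, hUo, hUm, hprop⟩
  obtain ⟨ψ, hψ, hcase⟩ := hprop id strictMono_id
  simp only [id_eq] at hcase
  rcases hcase with ⟨G, hG⟩ | hdiv
  · -- locally uniform convergence on U : contradiction with blow-up of 2nd derivative
    set S : Set ℂ := {z : ℂ | (z, w) ∈ U} with hSdef
    have hSo : IsOpen S := hUo.preimage (continuous_id.prodMk continuous_const)
    have h0S : (0:ℂ) ∈ S := hUm
    have hslice : TendstoLocallyUniformlyOn (fun (j : ℕ) (z : ℂ) => (F^[ψ j] (z, w)).1)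
        (fun z : ℂ => (G (z, w)).1) atTop S := by
      rw [Metric.tendstoLocallyUniformlyOn_iff] at hG ⊢
      intro ε hε x hx
      obtain ⟨t, ht, hev⟩ := hG ε hε (x, w) hx
      have hmt : Tendsto (fun z : ℂ => (z, w)) (nhdsWithin x S) (nhdsWithin (x, w) U) :=
        ((continuous_id.prodMk continuous_const).continuousWithinAt).tendsto_nhdsWithin
          (fun z hz => hz)
      refine ⟨(fun z : ℂ => (z, w)) ⁻¹' t, hmt ht, ?_⟩
      filter_upwards [hev] with j hj
      intro y hy
      have hle : dist ((G (y, w)).1) ((F^[ψ j] (y, w)).1)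
          ≤ dist (G (y, w)) (F^[ψ j] (y, w)) := by
        rw [Prod.dist_eq]; exact le_max_left _ _
      exact lt_of_le_of_lt hle (hj (y, w) hy)
    have hd1 := hslice.deriv
      (Eventually.of_forall fun j => (hud (ψ j) w).differentiableOn) hSo
    have hd2 := hd1.deriv
      (Eventually.of_forall fun j => (derivDiff (hud (ψ j) w)).differentiableOn) hSo
    have hconv := hd2.tendsto_at h0S
    have hdiv2 : Tendsto
        (fun j : ℕ => ‖deriv (deriv (fun z : ℂ => (F^[ψ j] (z, w)).1)) 0‖) atTop atTop := by
      have := (part3 w).comp hψ.tendsto_atTop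
      refine this.congr (fun j => ?_)
      simp only [Function.comp_apply, h21]
    exact not_tendsto_atTop_of_tendsto_nhds hconv.norm hdiv2
  · -- compact divergence : contradiction since the orbit of (0,w) is bounded
    have hKL := hdiv {((0:ℂ), w)} (Metric.closedBall 0 (‖w‖ + 1))
      (Set.singleton_subset_iff.mpr hUm) isCompact_singleton (isCompact_closedBall _ _)
    obtain ⟨j, hj⟩ := hKL.exists
    apply hj ((0:ℂ), w) (Set.mem_singleton _)
    rw [part1]
    rw [Metric.mem_closedBall, dist_zero_right]
    have h1 : ‖(((0:ℂ)), l ^ (ψ j) * w)‖ = max ‖(0:ℂ)‖ ‖l ^ (ψ j) * w‖ := rfl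
    rw [h1, norm_mul, hl1, one_mul, norm_zero]
    have := norm_nonneg w
    rw [max_eq_right this]
    linarith
end

section
/- Let H : U → ℂ² be a holomorphic map on U = {(u,w) : Re(u) > R, |w| < δ} of the form H(u,w) = (u + 1 + a(u,w), λw + b(u,w)), where |a(u,w)| < 1/2 and |b(u,w)| ≤ C/|u|² on U, with λ = e^{2πiθ}, |λ| = 1. Then there exists T ≥ R such that: for every (u₀,w₀) with Re(u₀) > T and |w₀| < δ/2, the orbit (u_n, w_n) = H^n(u₀,w₀) is defined for all n and satisfies Re(u_n) > T + n/2 and |w_n| < δ for all n ≥ 1. -/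
lemma stmt11_aux1 (C x : ℝ) (hC : 0 < C) (hx : 1 / 2 < x) :
    C / x ^ 2 ≤ 2 * C / (x - 1 / 2) - 2 * C / x := by
  have hx0 : 0 < x := by linarith
  have hxh : 0 < x - 1 / 2 := by linarith
  have h1 : 2 * C / (x - 1 / 2) - 2 * C / x = C / ((x - 1 / 2) * x) := by
    rw [div_sub_div _ _ (ne_of_gt hxh) (ne_of_gt hx0),
      div_eq_div_iff (by positivity) (by positivity)]
    ring
  rw [h1]
  apply div_le_div_of_nonneg_left hC.le (by positivity)
  nlinarith

lemma stmt11_aux2 (C x y : ℝ) (hC : 0 < C) (hx : 0 < x) (hxy : x ≤ y) :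
    C / y ^ 2 ≤ C / x ^ 2 := by
  apply div_le_div_of_nonneg_left hC.le (by positivity)
  nlinarith

/-- Orbit confinement: if `H(u,w) = (u+1+a(u,w), λw+b(u,w))` on
`{Re u > R, |w| < δ}` with `|a| < 1/2` and `|b| ≤ C/|u|²`, then there is
`T ≥ R` such that every orbit starting with `Re u₀ > T`, `|w₀| < δ/2` satisfies
`Re u_n > T + n/2` and `|w_n| < δ` for all `n ≥ 1`. -/
theorem stmt11 (l : ℂ) (hl : ‖l‖ = 1) (R δ C : ℝ)
    (hR : 0 < R) (hδ : 0 < δ) (hC : 0 < C)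
    (H : ℂ × ℂ → ℂ × ℂ) (a b : ℂ × ℂ → ℂ)
    (hH : ∀ u w : ℂ, R < u.re → ‖w‖ < δ →
      H (u, w) = (u + 1 + a (u, w), l * w + b (u, w)))
    (ha : ∀ u w : ℂ, R < u.re → ‖w‖ < δ → ‖a (u, w)‖ < 1 / 2)
    (hb : ∀ u w : ℂ, R < u.re → ‖w‖ < δ → ‖b (u, w)‖ ≤ C / ‖u‖ ^ 2) :
    ∃ T : ℝ, R ≤ T ∧ ∀ u₀ w₀ : ℂ, T < u₀.re → ‖w₀‖ < δ / 2 →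
      ∀ n : ℕ, 1 ≤ n →
        T + n / 2 < (H^[n] (u₀, w₀)).1.re ∧ ‖(H^[n] (u₀, w₀)).2‖ < δ := by
  have hex : ∃ T : ℝ, R ≤ T ∧ 1 / 2 < T ∧ 2 * C / (T - 1 / 2) < δ / 2 := by
    have hq : 0 < 4 * C / δ := by positivity
    refine ⟨R + 1 + 4 * C / δ, by linarith, by linarith, ?_⟩
    rw [div_lt_iff₀ (by linarith)]
    have h4 : 4 * C / δ * δ = 4 * C := by field_simp
    nlinarith [hδ, hC]
  obtain ⟨T, hRT, hThalf, hCb⟩ := hex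
  refine ⟨T, hRT, ?_⟩
  intro u₀ w₀ hu₀ hw₀
  have key : ∀ n : ℕ, T + (n : ℝ) / 2 < (H^[n] (u₀, w₀)).1.re ∧
      ‖(H^[n] (u₀, w₀)).2‖ ≤ ‖w₀‖ + (2 * C / (T - 1 / 2) - 2 * C / (T - 1 / 2 + (n : ℝ) / 2)) := by
    intro n
    induction n with
    | zero => exact ⟨by simpa using hu₀, by simp⟩
    | succ n ih =>
      obtain ⟨ih1, ih2⟩ := ih
      set p := H^[n] (u₀, w₀) with hp
      have hn2 : 0 ≤ (n : ℝ) / 2 := by positivity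
      have hx2 : 1 / 2 < T + (n : ℝ) / 2 := by linarith
      have hBmono : 2 * C / (T - 1 / 2 + (n : ℝ) / 2) ≤ 2 * C / (T - 1 / 2) :=
        div_le_div_of_nonneg_left (by linarith) (by linarith) (by linarith)
      have hBnn : 0 < 2 * C / (T - 1 / 2 + (n : ℝ) / 2) :=
        div_pos (by linarith) (by linarith)
      have hwn : ‖p.2‖ < δ := by
        calc ‖p.2‖ ≤ _ := ih2
          _ < δ / 2 + δ / 2 := by linarith
          _ = δ := by ring
      have hRlt : R < p.1.re := by linarith
      have hHp : H p = (p.1 + 1 + a p, l * p.2 + b p) := by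
        have h := hH p.1 p.2 hRlt hwn
        simpa using h
      have hnext : H^[n + 1] (u₀, w₀) = (p.1 + 1 + a p, l * p.2 + b p) := by
        rw [Function.iterate_succ_apply', ← hp, hHp]
      have hanorm : ‖a p‖ < 1 / 2 := by
        have h := ha p.1 p.2 hRlt hwn
        simpa using h
      have hare : -(1 / 2 : ℝ) < (a p).re := by
        have h1 : |(a p).re| ≤ ‖a p‖ := Complex.abs_re_le_norm (a p)
        have h2 := abs_le.mp h1
        linarith [h2.1]
      have hbnorm : ‖b p‖ ≤ C / ‖p.1‖ ^ 2 := by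
        have h := hb p.1 p.2 hRlt hwn
        simpa using h
      have hxnorm : T + (n : ℝ) / 2 < ‖p.1‖ := lt_of_lt_of_le ih1 (Complex.re_le_norm p.1)
      have hbx : ‖b p‖ ≤ C / (T + (n : ℝ) / 2) ^ 2 :=
        hbnorm.trans (stmt11_aux2 C _ _ hC (by linarith) hxnorm.le)
      have hstep : C / (T + (n : ℝ) / 2) ^ 2 ≤
          2 * C / (T + (n : ℝ) / 2 - 1 / 2) - 2 * C / (T + (n : ℝ) / 2) :=
        stmt11_aux1 C _ hC hx2
      constructor
      · rw [hnext]
        simp only [Complex.add_re, Complex.one_re]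
        push_cast
        linarith
      · rw [hnext]
        have hwnext : ‖l * p.2 + b p‖ ≤ ‖p.2‖ + ‖b p‖ := by
          calc ‖l * p.2 + b p‖ ≤ ‖l * p.2‖ + ‖b p‖ := norm_add_le _ _
            _ = ‖p.2‖ + ‖b p‖ := by rw [norm_mul, hl, one_mul]
        have hxeq1 : T - 1 / 2 + (n : ℝ) / 2 = T + (n : ℝ) / 2 - 1 / 2 := by ring
        have hxeq2 : T - 1 / 2 + ((n : ℝ) + 1) / 2 = T + (n : ℝ) / 2 := by ring
        push_cast
        rw [hxeq2]
        rw [hxeq1] at ih2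
        linarith
  intro n hn
  obtain ⟨h1, h2⟩ := key n
  refine ⟨h1, ?_⟩
  have hn2 : 0 ≤ (n : ℝ) / 2 := by positivity
  have hBmono : 2 * C / (T - 1 / 2 + (n : ℝ) / 2) ≤ 2 * C / (T - 1 / 2) :=
    div_le_div_of_nonneg_left (by linarith) (by linarith) (by linarith)
  have hBnn : 0 < 2 * C / (T - 1 / 2 + (n : ℝ) / 2) :=
    div_pos (by linarith) (by linarith)
  linarith
end

section
/- Let φ : U → ℂ² be univalent on U = {u : Re(u) > ρ} × D_k (D_k the disk of radius k) with φ(u,w) = (u − A log u + o(1), w + o(1)) as Re(u) → ∞ uniformly for |w| < k. Then there exists r ≥ ρ such that the image φ(U) contains the set {u ∈ ℂ : Re(u − r) > |Im(u)|} × D_{k/2}. -/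
open Metric Set
open scoped NNReal

private lemma norm_fderiv_eq_norm_deriv (f : ℂ → ℂ) (x : ℂ) :
    ‖fderiv ℂ f x‖ = ‖deriv f x‖ := by
  rw [← toSpanSingleton_deriv, ContinuousLinearMap.norm_toSpanSingleton]

private lemma mvt_c {f : ℂ → ℂ} {s : Set ℂ} (hs : Convex ℝ s) {C : ℝ}
    (hf : ∀ x ∈ s, DifferentiableAt ℂ f x) (hb : ∀ x ∈ s, ‖deriv f x‖ ≤ C)
    {x y : ℂ} (hx : x ∈ s) (hy : y ∈ s) : ‖f x - f y‖ ≤ C * ‖x - y‖ :=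
  hs.norm_image_sub_le_of_norm_fderiv_le hf
    (fun z hz => by rw [norm_fderiv_eq_norm_deriv]; exact hb z hz) hy hx

/-- Cauchy-estimate based Lipschitz bound: if `f` is holomorphic and bounded by `C` on an open
set `V`, and every point of a convex set `s` has its `δ`-closed-ball inside `V`, then `f` is
`C/δ`-Lipschitz on `s`. -/
private lemma lip_aux {f : ℂ → ℂ} {V : Set ℂ} (hV : IsOpen V) (hf : DifferentiableOn ℂ f V)
    {C δ : ℝ} (hδ : 0 < δ) (hC : ∀ x ∈ V, ‖f x‖ ≤ C) {s : Set ℂ} (hs : Convex ℝ s)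
    (hsub : ∀ x ∈ s, Metric.closedBall x δ ⊆ V) {x y : ℂ} (hx : x ∈ s) (hy : y ∈ s) :
    ‖f x - f y‖ ≤ C / δ * ‖x - y‖ := by
  refine mvt_c hs (fun z hz => hf.differentiableAt
    (hV.mem_nhds (hsub z hz (Metric.mem_closedBall_self hδ.le)))) (fun z hz => ?_) hx hy
  have hd : DiffContOnCl ℂ f (Metric.ball z δ) :=
    DifferentiableOn.diffContOnCl
      (hf.mono (closure_ball_subset_closedBall.trans (hsub z hz)))
  exact Complex.norm_deriv_le_of_forall_mem_sphere_norm_le hδ hd fun w hw =>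
    hC w (hsub z hz (Metric.sphere_subset_closedBall hw))

set_option maxHeartbeats 1000000 in
/-- If `φ` is univalent on `U = {Re u > ρ} × D_k` with
`φ(u,w) = (u − A log u + o(1), w + o(1))` as `Re u → ∞` uniformly in `|w| < k`,
then `φ(U)` contains `{Re(u−r) > |Im u|} × D_{k/2}` for some `r ≥ ρ`. -/
theorem stmt16 (A : ℂ) (ρ k : ℝ) (hk : 0 < k)
    (φ : ℂ × ℂ → ℂ × ℂ)
    (hinj : Set.InjOn φ {p : ℂ × ℂ | ρ < p.1.re ∧ ‖p.2‖ < k})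
    (hdiff : DifferentiableOn ℂ φ {p : ℂ × ℂ | ρ < p.1.re ∧ ‖p.2‖ < k})
    (e₁ e₂ : ℂ × ℂ → ℂ)
    (hform : ∀ p ∈ {p : ℂ × ℂ | ρ < p.1.re ∧ ‖p.2‖ < k},
      φ p = (p.1 - A * Complex.log p.1 + e₁ p, p.2 + e₂ p))
    (hsmall : ∀ ε : ℝ, 0 < ε → ∃ M : ℝ,
      ∀ p ∈ {p : ℂ × ℂ | ρ < p.1.re ∧ ‖p.2‖ < k},
        M < p.1.re → ‖e₁ p‖ < ε ∧ ‖e₂ p‖ < ε) :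
    ∃ r : ℝ, ρ ≤ r ∧
      {p : ℂ × ℂ | |p.1.im| < p.1.re - r ∧ ‖p.2‖ < k / 2} ⊆
        φ '' {p : ℂ × ℂ | ρ < p.1.re ∧ ‖p.2‖ < k} := by
  classical
  set D : Set (ℂ × ℂ) := {p : ℂ × ℂ | ρ < p.1.re ∧ ‖p.2‖ < k} with hDdef
  obtain ⟨ε, hεdef⟩ : ∃ x : ℝ, x = min (1/8) (k/64) := ⟨_, rfl⟩
  have hε : 0 < ε := hεdef ▸ lt_min (by norm_num) (by positivity)
  have hε8 : ε ≤ 1/8 := hεdef ▸ min_le_left _ _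
  have hεk : ε ≤ k/64 := hεdef ▸ min_le_right _ _
  obtain ⟨M, hM⟩ := hsmall ε hε
  obtain ⟨m, hmdef⟩ : ∃ x : ℝ, x = max (max ρ M) 0 := ⟨_, rfl⟩
  obtain ⟨B, hBdef⟩ : ∃ x : ℝ, x = ‖A‖ + 1 := ⟨_, rfl⟩
  have hB1 : (1:ℝ) ≤ B := hBdef ▸ le_add_of_nonneg_left (norm_nonneg A)
  have hlog2pos : (0:ℝ) < 2 * Real.log 2 + Real.pi + 1 := by
    have := Real.pi_pos
    have := Real.log_pos (by norm_num : (1:ℝ) < 2)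
    linarith
  obtain ⟨r, hrdef⟩ : ∃ x : ℝ,
      x = max (2*m+4) (max (64*B^2) (8*B*(2*Real.log 2 + Real.pi + 1))) := ⟨_, rfl⟩
  have hm0 : (0:ℝ) ≤ m := hmdef ▸ le_max_right _ _
  have hρm : ρ ≤ m := hmdef ▸ le_max_of_le_left (le_max_left _ _)
  have hMm : M ≤ m := hmdef ▸ le_max_of_le_left (le_max_right _ _)
  have hr1 : 2*m+4 ≤ r := hrdef ▸ le_max_left _ _
  have hr2 : 64*B^2 ≤ r := hrdef ▸ le_max_of_le_right (le_max_left _ _)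
  have hr3 : 8*B*(2*Real.log 2 + Real.pi + 1) ≤ r := hrdef ▸ le_max_of_le_right (le_max_right _ _)
  have hr64 : (64:ℝ) ≤ r := by nlinarith
  have hrA : 8*‖A‖ ≤ r := by nlinarith [norm_nonneg A]
  have hrpos : (0:ℝ) < r := by linarith
  refine ⟨r, by linarith, ?_⟩
  rintro ⟨v, z⟩ ⟨hv, hz⟩
  simp only [Set.mem_setOf_eq] at hv hz
  set t : ℝ := v.re with htdef
  have htr : r < t := by have := abs_nonneg v.im; linarith
  have ht64 : (64:ℝ) ≤ t := by linarith
  -- the open set where the error terms are differentiable and small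
  set V : Set (ℂ × ℂ) := {p : ℂ × ℂ | m < p.1.re ∧ ‖p.2‖ < k} with hVdef
  have hVD : V ⊆ D := fun p hp => ⟨lt_of_le_of_lt hρm hp.1, hp.2⟩
  have hDopen : IsOpen D := by
    rw [hDdef, Set.setOf_and]
    exact (isOpen_lt continuous_const (Complex.continuous_re.comp continuous_fst)).inter
      (isOpen_lt (continuous_norm.comp continuous_snd) continuous_const)
  have hVopen : IsOpen V := by
    rw [hVdef, Set.setOf_and]
    exact (isOpen_lt continuous_const (Complex.continuous_re.comp continuous_fst)).inter
      (isOpen_lt (continuous_norm.comp continuous_snd) continuous_const)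
  have heb : ∀ p ∈ V, ‖e₁ p‖ ≤ ε ∧ ‖e₂ p‖ ≤ ε := fun p hp =>
    ⟨(hM p (hVD hp) (lt_of_le_of_lt hMm hp.1)).1.le,
     (hM p (hVD hp) (lt_of_le_of_lt hMm hp.1)).2.le⟩
  have hslit : ∀ p : ℂ × ℂ, p ∈ V → p.1 ∈ Complex.slitPlane := fun p hp =>
    Complex.mem_slitPlane_iff.mpr (Or.inl (lt_of_le_of_lt hm0 hp.1))
  have he₁d : ∀ p ∈ V, DifferentiableAt ℂ e₁ p := by
    intro p hp
    have hφ : DifferentiableAt ℂ φ p := hdiff.differentiableAt (hDopen.mem_nhds (hVD hp))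
    have hg : DifferentiableAt ℂ (fun q : ℂ × ℂ => (φ q).1 - q.1 + A * Complex.log q.1) p := by
      refine (hφ.fst.sub differentiableAt_fst).add ?_
      exact (differentiableAt_const A).mul
        ((Complex.differentiableAt_log (hslit p hp)).comp p differentiableAt_fst)
    have heq : ∀ q ∈ V, e₁ q = (φ q).1 - q.1 + A * Complex.log q.1 := by
      intro q hq
      have h := congrArg Prod.fst (hform q (hVD hq))
      simp only [] at h
      rw [h]; ring
    exact hg.congr_of_eventuallyEq (Filter.eventuallyEq_of_mem (hVopen.mem_nhds hp) heq)
  have he₂d : ∀ p ∈ V, DifferentiableAt ℂ e₂ p := by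
    intro p hp
    have hφ : DifferentiableAt ℂ φ p := hdiff.differentiableAt (hDopen.mem_nhds (hVD hp))
    have hg : DifferentiableAt ℂ (fun q : ℂ × ℂ => (φ q).2 - q.2) p :=
      hφ.snd.sub differentiableAt_snd
    have heq : ∀ q ∈ V, e₂ q = (φ q).2 - q.2 := by
      intro q hq
      have h := congrArg Prod.snd (hform q (hVD hq))
      simp only [] at h
      rw [h]; ring
    exact hg.congr_of_eventuallyEq (Filter.eventuallyEq_of_mem (hVopen.mem_nhds hp) heq)
  -- the fixed point set
  set R : ℝ := t/2 with hRdef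
  have hRpos : (0:ℝ) < R := by rw [hRdef]; linarith
  set Su : Set ℂ := Metric.closedBall v R with hSudef
  set Sw : Set ℂ := Metric.closedBall z (k/4) with hSwdef
  set S : Set (ℂ × ℂ) := Su ×ˢ Sw with hSdef
  have hSu_re : ∀ u ∈ Su, t/2 ≤ u.re := by
    intro u hu
    have h1 : ‖u - v‖ ≤ R := by rwa [Metric.mem_closedBall, dist_eq_norm] at hu
    have h2 : |(u - v).re| ≤ ‖u - v‖ := Complex.abs_re_le_norm _
    rw [Complex.sub_re] at h2
    have := abs_le.mp (h2.trans h1)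
    rw [hRdef] at this
    linarith [this.1]
  have hSu_m : ∀ u ∈ Su, m + 2 ≤ u.re := fun u hu => by
    have := hSu_re u hu; linarith
  have hSu_abs : ∀ u ∈ Su, ‖u‖ ≤ 4*t := by
    intro u hu
    have h1 : ‖u - v‖ ≤ R := by rwa [Metric.mem_closedBall, dist_eq_norm] at hu
    have h2 : ‖v‖ ≤ |v.re| + |v.im| := Complex.norm_le_abs_re_add_abs_im v
    have h3 : ‖u‖ ≤ ‖u - v‖ + ‖v‖ := by
      have := norm_add_le (u - v) v; simpa using this
    have h4 : ‖u - v‖ = ‖u - v‖ := rfl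
    have h5 : |v.re| = t := abs_of_pos (by linarith)
    have h6 : |v.im| ≤ t := by linarith
    rw [hRdef] at h1
    rw [h4] at h3
    linarith
  have hSw_norm : ∀ w ∈ Sw, ‖w‖ < 3*k/4 := by
    intro w hw
    have h1 : ‖w - z‖ ≤ k/4 := by rwa [Metric.mem_closedBall, dist_eq_norm] at hw
    calc ‖w‖ ≤ ‖w - z‖ + ‖z‖ := by
          simpa using norm_add_le (w - z) z
      _ < k/4 + k/2 := by linarith
      _ = 3*k/4 := by ring
  have hSV : S ⊆ V := by
    rintro ⟨u, w⟩ hp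
    refine ⟨?_, ?_⟩
    · have := hSu_m u hp.1; simp only [Set.mem_setOf_eq]; linarith
    · have := hSw_norm w hp.2; linarith
  -- the contraction map
  set T : ℂ × ℂ → ℂ × ℂ :=
    fun p => (v + A * Complex.log p.1 - e₁ p, z - e₂ p) with hTdef
  -- bound on ‖log u‖ on Su
  have hlogb : ∀ u ∈ Su, ‖Complex.log u‖ ≤ 2*Real.log 2 + Real.pi + t/(4*B) := by
    intro u hu
    have hre : t/2 ≤ u.re := hSu_re u hu
    have habs1 : (1:ℝ) ≤ ‖u‖ := by
      have := Complex.re_le_norm u; linarith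
    have habs2 : ‖u‖ ≤ 4*t := hSu_abs u hu
    have h1 : ‖Complex.log u‖ ≤ |(Complex.log u).re| + |(Complex.log u).im| :=
      Complex.norm_le_abs_re_add_abs_im _
    rw [Complex.log_re, Complex.log_im] at h1
    have h2 : |Real.log (‖u‖)| = Real.log (‖u‖) :=
      abs_of_nonneg (Real.log_nonneg habs1)
    have h3 : Real.log (‖u‖) ≤ Real.log (4*t) :=
      Real.log_le_log (by linarith) habs2
    have h4 : Real.log (4*t) = Real.log 4 + Real.log t :=
      Real.log_mul (by norm_num) (by linarith)
    have h5 : Real.log 4 = 2*Real.log 2 := by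
      rw [show (4:ℝ) = 2^2 by norm_num, Real.log_pow]; push_cast; ring
    have h6 : Real.log t ≤ t/(4*B) := by
      have hBpos : (0:ℝ) < B := by linarith
      have h8B : (8*B) ≤ Real.sqrt t := by
        rw [show (8*B) = Real.sqrt ((8*B)^2) by rw [Real.sqrt_sq (by positivity)]]
        apply Real.sqrt_le_sqrt; nlinarith
      have hsqt : Real.sqrt t ≤ t/(8*B) := by
        have h9 : Real.sqrt t = t / Real.sqrt t := (Real.div_sqrt).symm
        rw [h9]
        apply div_le_div_of_nonneg_left (by linarith) (by positivity) h8B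
      have h10 : Real.log (Real.sqrt t) ≤ Real.sqrt t - 1 :=
        Real.log_le_sub_one_of_pos (by positivity)
      have h11 : Real.log t = 2 * Real.log (Real.sqrt t) := by
        rw [Real.log_sqrt (by linarith)]; ring
      rw [h11]
      calc 2 * Real.log (Real.sqrt t) ≤ 2 * (Real.sqrt t - 1) := by linarith
        _ ≤ 2 * (t/(8*B)) := by linarith
        _ = t/(4*B) := by
            have hBne : B ≠ 0 := by linarith
            field_simp
            ring
    have harg : |u.arg| ≤ Real.pi := Complex.abs_arg_le_pi u
    calc ‖Complex.log u‖ ≤ |Real.log (‖u‖)| + |u.arg| := h1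
      _ ≤ Real.log (‖u‖) + Real.pi := by rw [h2]; linarith
      _ ≤ (Real.log 4 + Real.log t) + Real.pi := by rw [← h4]; linarith
      _ ≤ 2*Real.log 2 + Real.pi + t/(4*B) := by rw [h5]; linarith
  -- T maps S into S
  have hmapsto : Set.MapsTo T S S := by
    rintro ⟨u, w⟩ hp
    have hpV : (u, w) ∈ V := hSV hp
    have hb := heb _ hpV
    constructor
    · rw [hSudef, Metric.mem_closedBall, dist_eq_norm]
      have he : (v + A * Complex.log u - e₁ (u, w)) - v
          = A * Complex.log u - e₁ (u, w) := by ring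
      rw [he]
      have h1 : ‖A * Complex.log u - e₁ (u, w)‖
          ≤ ‖A‖ * ‖Complex.log u‖ + ‖e₁ (u, w)‖ := by
        calc ‖A * Complex.log u - e₁ (u, w)‖
            ≤ ‖A * Complex.log u‖ + ‖e₁ (u, w)‖ := norm_sub_le _ _
          _ = ‖A‖ * ‖Complex.log u‖ + ‖e₁ (u, w)‖ := by rw [norm_mul]
      have h2 := hlogb u hp.1
      have hA : ‖A‖ ≤ B := by rw [hBdef]; linarith
      have hAB : ‖A‖ * ‖Complex.log u‖ ≤ B * (2*Real.log 2 + Real.pi) + t/4 := by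
        have hln : (0:ℝ) ≤ ‖Complex.log u‖ := norm_nonneg _
        have hBpos : (0:ℝ) < B := by linarith
        have step : ‖A‖ * ‖Complex.log u‖ ≤ B * (2*Real.log 2 + Real.pi + t/(4*B)) := by
          apply mul_le_mul hA h2 hln (by linarith)
        have : B * (2*Real.log 2 + Real.pi + t/(4*B))
            = B * (2*Real.log 2 + Real.pi) + t/4 := by
          have hBne : B ≠ 0 := by linarith
          field_simp
        linarith
      have hBr : B * (2*Real.log 2 + Real.pi) ≤ t/8 := by nlinarith
      have hεt : ε ≤ t/8 := by linarith
      have := hb.1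
      rw [hRdef]
      linarith
    · rw [hSwdef, Metric.mem_closedBall, dist_eq_norm]
      have he : (z - e₂ (u, w)) - z = -(e₂ (u, w)) := by ring
      rw [he, norm_neg]
      have := hb.2
      linarith
  -- Lipschitz bounds on the error terms over S
  have key : ∀ e : ℂ × ℂ → ℂ, (∀ p ∈ V, DifferentiableAt ℂ e p) → (∀ p ∈ V, ‖e p‖ ≤ ε) →
      ∀ p ∈ S, ∀ q ∈ S, ‖e p - e q‖ ≤ (1/4 : ℝ) * dist p q := by
    rintro e hed heb' ⟨u, w⟩ hp ⟨u', w'⟩ hq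
    -- Lipschitz in the first variable
    have hV₁ : IsOpen {x : ℂ | m < x.re} :=
      isOpen_lt continuous_const Complex.continuous_re
    have hfd : DifferentiableOn ℂ (fun x => e (x, w)) {x : ℂ | m < x.re} := by
      intro x hx
      have hxV : (x, w) ∈ V := ⟨hx, by have := hSw_norm w hp.2; linarith⟩
      exact ((hed _ hxV).comp x
        (differentiableAt_id.prodMk (differentiableAt_const w))).differentiableWithinAt
    have h1 : ‖e (u, w) - e (u', w)‖ ≤ ε / 1 * ‖u - u'‖ := by
      refine lip_aux hV₁ hfd one_pos
        (fun x hx => heb' (x, w) ⟨hx, by have := hSw_norm w hp.2; linarith⟩)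
        (convex_closedBall v R) ?_ hp.1 hq.1
      intro x hx y hy
      simp only [Metric.mem_closedBall, dist_eq_norm] at hy
      have h2 : |(y - x).re| ≤ ‖y - x‖ := Complex.abs_re_le_norm _
      rw [Complex.sub_re] at h2
      have h3 := (abs_le.mp (h2.trans hy)).1
      have := hSu_m x hx
      simp only [Set.mem_setOf_eq]
      linarith
    -- Lipschitz in the second variable
    have hV₂ : IsOpen {y : ℂ | ‖y‖ < k} := isOpen_lt continuous_norm continuous_const
    have hgd : DifferentiableOn ℂ (fun y => e (u', y)) {y : ℂ | ‖y‖ < k} := by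
      intro y hy
      have hyV : (u', y) ∈ V := ⟨by have := hSu_m u' hq.1; simp only [Set.mem_setOf_eq]; linarith,
        hy⟩
      exact ((hed _ hyV).comp y
        ((differentiableAt_const u').prodMk differentiableAt_id)).differentiableWithinAt
    have h2 : ‖e (u', w) - e (u', w')‖ ≤ ε / (k/8) * ‖w - w'‖ := by
      refine lip_aux hV₂ hgd (by positivity)
        (fun y hy => heb' (u', y)
          ⟨by have := hSu_m u' hq.1; simp only [Set.mem_setOf_eq]; linarith, hy⟩)
        (convex_closedBall z (k/4)) ?_ hp.2 hq.2
      intro y hy y' hy'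
      simp only [Metric.mem_closedBall, dist_eq_norm] at hy hy'
      have h3 : ‖y'‖ ≤ ‖y' - y‖ + ‖y - z‖ + ‖z‖ := by
        calc ‖y'‖ = ‖(y' - y) + (y - z) + z‖ := by ring_nf
          _ ≤ ‖(y' - y) + (y - z)‖ + ‖z‖ := norm_add_le _ _
          _ ≤ ‖y' - y‖ + ‖y - z‖ + ‖z‖ := by linarith [norm_add_le (y' - y) (y - z)]
      simp only [Set.mem_setOf_eq]
      linarith
    have hd1 : ‖u - u'‖ ≤ dist (u, w) (u', w') := by
      rw [Prod.dist_eq, dist_eq_norm]; exact le_max_left _ _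
    have hd2 : ‖w - w'‖ ≤ dist (u, w) (u', w') := by
      rw [Prod.dist_eq, dist_eq_norm, dist_eq_norm]; exact le_max_right _ _
    have hdist0 : (0:ℝ) ≤ dist (u, w) (u', w') := dist_nonneg
    have hc1 : ε / 1 * ‖u - u'‖ ≤ (1/8) * dist (u, w) (u', w') := by
      rw [div_one]
      calc ε * ‖u - u'‖ ≤ ε * dist (u, w) (u', w') :=
            mul_le_mul_of_nonneg_left hd1 hε.le
        _ ≤ (1/8) * dist (u, w) (u', w') := mul_le_mul_of_nonneg_right hε8 hdist0
    have hc2 : ε / (k/8) * ‖w - w'‖ ≤ (1/8) * dist (u, w) (u', w') := by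
      have hεk8 : ε / (k/8) ≤ 1/8 := by
        rw [div_le_iff₀ (by positivity)]
        linarith
      calc ε / (k/8) * ‖w - w'‖ ≤ ε / (k/8) * dist (u, w) (u', w') :=
            mul_le_mul_of_nonneg_left hd2 (by positivity)
        _ ≤ (1/8) * dist (u, w) (u', w') := mul_le_mul_of_nonneg_right hεk8 hdist0
    calc ‖e (u, w) - e (u', w')‖
        ≤ ‖e (u, w) - e (u', w)‖ + ‖e (u', w) - e (u', w')‖ := by
          have := norm_add_le (e (u, w) - e (u', w)) (e (u', w) - e (u', w'))
          simpa using this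
      _ ≤ ε / 1 * ‖u - u'‖ + ε / (k/8) * ‖w - w'‖ := by linarith
      _ ≤ (1/8) * dist (u, w) (u', w') + (1/8) * dist (u, w) (u', w') := by linarith
      _ = (1/4) * dist (u, w) (u', w') := by ring
  have key₁ := key e₁ he₁d (fun p hp => (heb p hp).1)
  have key₂ := key e₂ he₂d (fun p hp => (heb p hp).2)
  -- log is Lipschitz on Su
  have hloglip : ∀ u ∈ Su, ∀ u' ∈ Su,
      ‖Complex.log u - Complex.log u'‖ ≤ (2/r) * ‖u - u'‖ := by
    intro u hu u' hu'
    refine mvt_c (convex_closedBall v R) (fun x hx => Complex.differentiableAt_log ?_)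
      (fun x hx => ?_) hu hu'
    · exact Complex.mem_slitPlane_iff.mpr (Or.inl (by have := hSu_re x hx; linarith))
    · have hd : deriv Complex.log x = x⁻¹ :=
        (Complex.hasDerivAt_log
          (Complex.mem_slitPlane_iff.mpr (Or.inl (by have := hSu_re x hx; linarith)))).deriv
      rw [hd, norm_inv]
      have hre : t/2 ≤ x.re := hSu_re x hx
      have habs : t/2 ≤ ‖x‖ := le_trans hre (Complex.re_le_norm x)
      have h1 : ‖x‖⁻¹ ≤ (t/2)⁻¹ := by
        apply inv_anti₀ (by linarith) habs
      have h2 : (t/2)⁻¹ ≤ 2/r := by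
        rw [inv_eq_one_div]
        rw [div_le_div_iff₀ (by linarith) hrpos]
        linarith
      linarith
  -- T is a contraction on S
  have hlip : ∀ p ∈ S, ∀ q ∈ S, dist (T p) (T q) ≤ (1/2 : ℝ) * dist p q := by
    rintro ⟨u, w⟩ hp ⟨u', w'⟩ hq
    rw [Prod.dist_eq]
    have hdist0 : (0:ℝ) ≤ dist ((u, w) : ℂ × ℂ) (u', w') := dist_nonneg
    apply max_le
    · -- first component
      rw [dist_eq_norm]
      have he : (v + A * Complex.log u - e₁ (u, w)) - (v + A * Complex.log u' - e₁ (u', w'))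
          = A * (Complex.log u - Complex.log u') - (e₁ (u, w) - e₁ (u', w')) := by ring
      simp only [hTdef]
      rw [he]
      have h1 : ‖A * (Complex.log u - Complex.log u') - (e₁ (u, w) - e₁ (u', w'))‖
          ≤ ‖A‖ * ‖Complex.log u - Complex.log u'‖ + ‖e₁ (u, w) - e₁ (u', w')‖ := by
        calc ‖A * (Complex.log u - Complex.log u') - (e₁ (u, w) - e₁ (u', w'))‖
            ≤ ‖A * (Complex.log u - Complex.log u')‖ + ‖e₁ (u, w) - e₁ (u', w')‖ :=
              norm_sub_le _ _
          _ = ‖A‖ * ‖Complex.log u - Complex.log u'‖ + ‖e₁ (u, w) - e₁ (u', w')‖ := by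
              rw [norm_mul]
      have h2 := hloglip u hp.1 u' hq.1
      have hd1 : ‖u - u'‖ ≤ dist ((u, w) : ℂ × ℂ) (u', w') := by
        rw [Prod.dist_eq, dist_eq_norm]; exact le_max_left _ _
      have h3 : ‖A‖ * ‖Complex.log u - Complex.log u'‖
          ≤ (1/4) * dist ((u, w) : ℂ × ℂ) (u', w') := by
        have hc : ‖A‖ * (2/r) ≤ 1/4 := by
          rw [mul_div_assoc']
          rw [div_le_iff₀ hrpos]
          linarith
        calc ‖A‖ * ‖Complex.log u - Complex.log u'‖
            ≤ ‖A‖ * ((2/r) * ‖u - u'‖) :=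
              mul_le_mul_of_nonneg_left h2 (norm_nonneg A)
          _ = (‖A‖ * (2/r)) * ‖u - u'‖ := by ring
          _ ≤ (1/4) * ‖u - u'‖ :=
              mul_le_mul_of_nonneg_right hc (norm_nonneg _)
          _ ≤ (1/4) * dist ((u, w) : ℂ × ℂ) (u', w') := by linarith
      have h4 := key₁ (u, w) hp (u', w') hq
      linarith
    · -- second component
      rw [dist_eq_norm]
      have he : (z - e₂ (u, w)) - (z - e₂ (u', w')) = -(e₂ (u, w) - e₂ (u', w')) := by ring
      simp only [hTdef]
      rw [he, norm_neg]
      have h4 := key₂ (u, w) hp (u', w') hq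
      linarith
  have hlipOn : LipschitzOnWith (1/2 : ℝ≥0) T S := by
    apply LipschitzOnWith.of_dist_le_mul
    intro x hx y hy
    have := hlip x hx y hy
    simpa using this
  have hScomplete : IsComplete S :=
    ((Metric.isClosed_closedBall).prod (Metric.isClosed_closedBall)).isComplete
  have hcontr : ContractingWith (1/2 : ℝ≥0) (hmapsto.restrict T S S) := by
    constructor
    · rw [← NNReal.coe_lt_coe]; norm_num
    · intro x y
      have h := hlipOn x.2 y.2
      simpa [Subtype.edist_eq, Set.MapsTo.val_restrict_apply] using h
  have hvzS : ((v, z) : ℂ × ℂ) ∈ S :=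
    ⟨Metric.mem_closedBall_self hRpos.le, Metric.mem_closedBall_self (by positivity)⟩
  obtain ⟨y, hyS, hfix, -, -⟩ :=
    hcontr.exists_fixedPoint' hScomplete hmapsto hvzS (edist_ne_top _ _)
  have hyV : y ∈ V := hSV hyS
  have hyD : y ∈ D := hVD hyV
  have hfix' : T y = y := hfix
  have h1 : v + A * Complex.log y.1 - e₁ y = y.1 := congrArg Prod.fst hfix'
  have h2 : z - e₂ y = y.2 := congrArg Prod.snd hfix'
  refine ⟨y, hyD, ?_⟩
  rw [hform y hyD, Prod.mk.injEq]
  constructor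
  · linear_combination -h1
  · linear_combination -h2
end

section
/- Define F₁(z,w) = (z, λw + z), F₂(z,w) = (z e^w, w), F₃(z,w) = (z, w − z), F₄(z,w) = (z e^{−w}, w), F₅(z,w) = (z, w e^z), and F = F₅ ∘ F₄ ∘ F₃ ∘ F₂ ∘ F₁. Then F is a holomorphic automorphism of ℂ², F preserves the line {0} × ℂ with F(0,w) = (0, λw), and its expansion in z satisfies: the first coordinate of F is z + e^{λw} z² + O(z³) and the second coordinate is λw − z ∑_{k=2}^{∞} (λ^k/k!) w^k + O(z²). -/
lemma hu (c : ℂ) (z : ℂ) :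
    HasDerivAt (fun z : ℂ => z * Complex.exp (c + z)) ((1 + z) * Complex.exp (c + z)) z := by
  have h1 : HasDerivAt (fun z : ℂ => Complex.exp (c + z)) (Complex.exp (c + z) * 1) z :=
    ((hasDerivAt_id z).const_add c).cexp
  have : HasDerivAt (fun y : ℂ => y * Complex.exp (c + y))
      (1 * Complex.exp (c + z) + z * (Complex.exp (c + z) * 1)) z := (hasDerivAt_id' z).fun_mul h1
  convert this using 1
  ring

lemma hg (c : ℂ) (z : ℂ) :
    HasDerivAt (fun z : ℂ => z * Complex.exp (z * Complex.exp (c + z)))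
      (Complex.exp (z * Complex.exp (c + z)) +
        z * (Complex.exp (z * Complex.exp (c + z)) * ((1 + z) * Complex.exp (c + z)))) z := by
  have h1 := ((hu c z).cexp)
  have : HasDerivAt (fun y : ℂ => y * Complex.exp (y * Complex.exp (c + y)))
      (1 * Complex.exp (z * Complex.exp (c + z)) +
        z * (Complex.exp (z * Complex.exp (c + z)) * ((1 + z) * Complex.exp (c + z)))) z :=
    (hasDerivAt_id' z).fun_mul h1
  convert this using 1
  ring

lemma key (c z : ℂ) :
    z * Complex.exp (c + z) * Complex.exp (-(c + z - z * Complex.exp (c + z))) =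
      z * Complex.exp (z * Complex.exp (c + z)) := by
  rw [mul_assoc, ← Complex.exp_add]
  ring_nf

/-- The composition of shears and overshears
`F = F₅ ∘ F₄ ∘ F₃ ∘ F₂ ∘ F₁` is a holomorphic automorphism of `ℂ²` preserving
`{0} × ℂ` with `F(0,w) = (0,λw)`, whose expansion in `z` satisfies
`π₁F = z + e^{λw} z² + O(z³)` and `π₂F = λw − (e^{λw} − 1 − λw) z + O(z²)`. -/
theorem stmt18 (l : ℂ) (hl : ‖l‖ = 1)
    (F : ℂ × ℂ → ℂ × ℂ)
    (hF : F = (fun p : ℂ × ℂ => (p.1, p.2 * Complex.exp p.1)) ∘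
              (fun p : ℂ × ℂ => (p.1 * Complex.exp (-p.2), p.2)) ∘
              (fun p : ℂ × ℂ => (p.1, p.2 - p.1)) ∘
              (fun p : ℂ × ℂ => (p.1 * Complex.exp p.2, p.2)) ∘
              (fun p : ℂ × ℂ => (p.1, l * p.2 + p.1))) :
    Function.Bijective F ∧ Differentiable ℂ F ∧
    (∀ w : ℂ, F (0, w) = (0, l * w)) ∧
    (∀ w : ℂ, deriv (fun z : ℂ => (F (z, w)).1) 0 = 1) ∧
    (∀ w : ℂ, iteratedDeriv 2 (fun z : ℂ => (F (z, w)).1) 0 = 2 * Complex.exp (l * w)) ∧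
    (∀ w : ℂ, deriv (fun z : ℂ => (F (z, w)).2) 0 = -(Complex.exp (l * w) - 1 - l * w)) := by
  subst hF
  have hl0 : l ≠ 0 := by
    intro h; rw [h] at hl; simp at hl
  have P1 : ∀ w : ℂ, (fun z : ℂ =>
      (((fun p : ℂ × ℂ => (p.1, p.2 * Complex.exp p.1)) ∘
        (fun p : ℂ × ℂ => (p.1 * Complex.exp (-p.2), p.2)) ∘
        (fun p : ℂ × ℂ => (p.1, p.2 - p.1)) ∘
        (fun p : ℂ × ℂ => (p.1 * Complex.exp p.2, p.2)) ∘
        (fun p : ℂ × ℂ => (p.1, l * p.2 + p.1))) (z, w)).1) =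
      fun z : ℂ => z * Complex.exp (z * Complex.exp (l * w + z)) := by
    intro w; funext z
    simp only [Function.comp_apply]
    exact key (l * w) z
  have P2 : ∀ w : ℂ, (fun z : ℂ =>
      (((fun p : ℂ × ℂ => (p.1, p.2 * Complex.exp p.1)) ∘
        (fun p : ℂ × ℂ => (p.1 * Complex.exp (-p.2), p.2)) ∘
        (fun p : ℂ × ℂ => (p.1, p.2 - p.1)) ∘
        (fun p : ℂ × ℂ => (p.1 * Complex.exp p.2, p.2)) ∘
        (fun p : ℂ × ℂ => (p.1, l * p.2 + p.1))) (z, w)).2) =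
      fun z : ℂ => (l * w + z - z * Complex.exp (l * w + z)) *
        Complex.exp (z * Complex.exp (z * Complex.exp (l * w + z))) := by
    intro w; funext z
    simp only [Function.comp_apply]
    rw [key (l * w) z]
  refine ⟨?_, ?_, ?_, ?_, ?_, ?_⟩
  · -- bijective
    have b1 : Function.Bijective (fun p : ℂ × ℂ => (p.1, l * p.2 + p.1)) := by
      apply Function.bijective_iff_has_inverse.mpr
      refine ⟨fun q => (q.1, (q.2 - q.1) / l), fun p => ?_, fun q => ?_⟩
      · obtain ⟨a, b⟩ := p; simp; field_simp
      · obtain ⟨a, b⟩ := q; simp; field_simp; ring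
    have b2 : Function.Bijective (fun p : ℂ × ℂ => (p.1 * Complex.exp p.2, p.2)) := by
      apply Function.bijective_iff_has_inverse.mpr
      refine ⟨fun q => (q.1 * Complex.exp (-q.2), q.2), fun p => ?_, fun q => ?_⟩
      · obtain ⟨a, b⟩ := p; simp [mul_assoc, ← Complex.exp_add]
      · obtain ⟨a, b⟩ := q; simp [mul_assoc, ← Complex.exp_add]
    have b3 : Function.Bijective (fun p : ℂ × ℂ => (p.1, p.2 - p.1)) := by
      apply Function.bijective_iff_has_inverse.mpr
      exact ⟨fun q => (q.1, q.2 + q.1), fun p => by simp, fun q => by simp⟩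
    have b4 : Function.Bijective (fun p : ℂ × ℂ => (p.1 * Complex.exp (-p.2), p.2)) := by
      apply Function.bijective_iff_has_inverse.mpr
      refine ⟨fun q => (q.1 * Complex.exp q.2, q.2), fun p => ?_, fun q => ?_⟩
      · obtain ⟨a, b⟩ := p; simp [mul_assoc, ← Complex.exp_add]
      · obtain ⟨a, b⟩ := q; simp [mul_assoc, ← Complex.exp_add]
    have b5 : Function.Bijective (fun p : ℂ × ℂ => (p.1, p.2 * Complex.exp p.1)) := by
      apply Function.bijective_iff_has_inverse.mpr
      refine ⟨fun q => (q.1, q.2 * Complex.exp (-q.1)), fun p => ?_, fun q => ?_⟩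
      · obtain ⟨a, b⟩ := p; simp [mul_assoc, ← Complex.exp_add]
      · obtain ⟨a, b⟩ := q; simp [mul_assoc, ← Complex.exp_add]
    exact b5.comp (b4.comp (b3.comp (b2.comp b1)))
  · -- differentiable
    fun_prop
  · -- F(0,w)
    intro w
    simp [Function.comp]
  · -- first derivative of π₁
    intro w
    rw [P1 w]
    have := (hg (l * w) 0).deriv
    simpa using this
  · -- second derivative of π₁
    intro w
    rw [P1 w]
    have hdg : deriv (fun z : ℂ => z * Complex.exp (z * Complex.exp (l * w + z))) =
        fun z : ℂ => Complex.exp (z * Complex.exp (l * w + z)) +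
          z * (Complex.exp (z * Complex.exp (l * w + z)) * ((1 + z) * Complex.exp (l * w + z))) :=
      funext fun z => (hg (l * w) z).deriv
    rw [show (2 : ℕ) = 1 + 1 from rfl, iteratedDeriv_succ, iteratedDeriv_one, hdg]
    set c := l * w
    have hA := (hu c 0).cexp
    have hB : HasDerivAt (fun z : ℂ => (1 + z) * Complex.exp (c + z))
        (1 * Complex.exp (c + 0) + (1 + 0) * (Complex.exp (c + 0) * 1)) 0 :=
      ((hasDerivAt_id' 0).const_add 1).fun_mul (((hasDerivAt_id' 0).const_add c).cexp)
    have hC := hA.fun_mul hB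
    have hD := (hasDerivAt_id' 0).fun_mul hC
    have hTot := hA.fun_add hD
    have := hTot.deriv
    rw [this]
    simp
    ring
  · -- derivative of π₂
    intro w
    rw [P2 w]
    have ha : HasDerivAt (fun z : ℂ => l * w + z - z * Complex.exp (l * w + z))
        (1 - (1 + 0) * Complex.exp (l * w + 0)) 0 := by
      have h1 : HasDerivAt (fun z : ℂ => l * w + z) 1 0 := (hasDerivAt_id' 0).const_add (l * w)
      exact h1.sub (hu (l * w) 0)
    have hb := (hg (l * w) 0).cexp
    have := (ha.fun_mul hb).deriv
    rw [this]
    simp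
    ring
end
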